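/- arXiv:1705.08033 — 8 statements merged into one kernel-verified Lean document; each statement's English description precedes it below -/
import Mathlib

section
/- For every society consisting of at least two pairwise disjoint communities (each community containing at least one man and at least one woman), there exists a strict preference profile such that no stable matching scheme is weakly integration monotonic; that is, for every matching scheme σ such that σ(·,P) is a stable matching for every population P, there exists an agent x who strictly prefers σ(x,C_x) to σ(x,S), where C_x is x's community and S is the full society. Equivalently, no stable matching mechanism is weakly integration monotonic. -/
/-- A strict preference profile: each agent `x` has a strict total order over
agents of the opposite gender, and prefers any such partner to being unmatched
(i.e. to "obtaining" him/herself). `pref x a b` means `x` strictly prefers `a` to `b`. -/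
structure Prefs (Agent : Type) (man : Agent → Bool) where
  pref : Agent → Agent → Agent → Prop
  irrefl : ∀ x a, ¬ pref x a a
  trans : ∀ x a b c, pref x a b → pref x b c → pref x a c
  total : ∀ x a b, man a ≠ man x → man b ≠ man x → a ≠ b → pref x a b ∨ pref x b a
  worst : ∀ x a, man a ≠ man x → pref x a x

/-- `x` weakly prefers `a` to `b`. -/
def Prefs.weakPref {Agent : Type} {man : Agent → Bool} (P : Prefs Agent man)
    (x a b : Agent) : Prop := a = b ∨ P.pref x a b

/-- A matching on the set of agents `A`: a function of order two matching
men only to women (or to themselves, meaning unmatched), fixing agents outside `A`. -/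
structure IsMatching {Agent : Type} (man : Agent → Bool) (A : Set Agent)
    (μ : Agent → Agent) : Prop where
  mem : ∀ x ∈ A, μ x ∈ A
  invol : ∀ x ∈ A, μ (μ x) = x
  opp : ∀ x ∈ A, μ x ≠ x → man (μ x) ≠ man x
  fix : ∀ x ∉ A, μ x = x

/-- A matching is stable if there is no blocking pair: a man `m` and a woman `w`,
not married to each other, each strictly preferring the other to their own partner. -/
def IsStable {Agent : Type} {man : Agent → Bool} (P : Prefs Agent man)
    (A : Set Agent) (μ : Agent → Agent) : Prop :=
  IsMatching man A μ ∧
    ¬ ∃ m ∈ A, ∃ w ∈ A, man m ≠ man w ∧ μ m ≠ w ∧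
      P.pref m w (μ m) ∧ P.pref w m (μ w)

/-- A matching is Pareto optimal if no matching on the same agents makes every
agent weakly better off and some agent strictly better off. -/
def IsPareto {Agent : Type} {man : Agent → Bool} (P : Prefs Agent man)
    (A : Set Agent) (μ : Agent → Agent) : Prop :=
  IsMatching man A μ ∧
    ¬ ∃ μ' : Agent → Agent, IsMatching man A μ' ∧
      (∀ x ∈ A, P.weakPref x (μ' x) (μ x)) ∧
      ∃ y ∈ A, P.pref y (μ' y) (μ y)

/-- **Proposition 1 (no stable matching mechanism is WIM).**
For every society consisting of at least two pairwise disjoint communities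
(indexed by `ι`, each containing at least one man and at least one woman),
there exists a strict preference profile such that for every stable matching
scheme `σ` (i.e. `σ (·, Q)` is a stable matching on the agents of the
population `Q` for every population `Q`), some agent `x` strictly prefers
the partner obtained in x's own community `σ (x, {comm x})` to the partner
obtained in the full society `σ (x, Set.univ)`. -/
theorem no_stable_scheme_is_weakly_integration_monotonic
    {Agent ι : Type} [Fintype Agent] [Fintype ι]
    (man : Agent → Bool) (comm : Agent → ι)
    (hasMan : ∀ i : ι, ∃ x, comm x = i ∧ man x = true)
    (hasWoman : ∀ i : ι, ∃ x, comm x = i ∧ man x = false)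
    (hκ : 2 ≤ Fintype.card ι) :
    ∃ P : Prefs Agent man,
      ∀ σ : Agent → Set ι → Agent,
        (∀ Q : Set ι, IsStable P {x | comm x ∈ Q} (fun x => σ x Q)) →
        ∃ x : Agent, P.pref x (σ x {comm x}) (σ x Set.univ) := by

  classical
  obtain ⟨i, j, hij⟩ := Fintype.exists_pair_of_one_lt_card
    (by omega : 1 < Fintype.card ι)
  obtain ⟨m1, hm1i, hm1⟩ := hasMan i
  obtain ⟨w1, hw1i, hw1⟩ := hasWoman i
  obtain ⟨w2, hw2j, hw2⟩ := hasWoman j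
  set N := Fintype.card Agent + 2 with hN
  set e : Agent → ℕ := fun a => (Fintype.equivFin Agent a : ℕ) with he
  have heinj : Function.Injective e := fun a b h =>
    (Fintype.equivFin Agent).injective (Fin.val_injective h)
  have heN : ∀ a, e a < Fintype.card Agent := fun a => (Fintype.equivFin Agent a).isLt
  have hm1w1 : m1 ≠ w1 := by intro h; rw [h, hw1] at hm1; simp at hm1
  have hm1w2 : m1 ≠ w2 := by intro h; rw [h, hw2] at hm1; simp at hm1
  have hw12 : w1 ≠ w2 := fun h => hij (by rw [← hw1i, ← hw2j, h])
  set rank : Agent → Agent → ℕ := fun x a =>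
    if a = x then N
    else if x = m1 then (if a = w2 then 0 else if a = w1 then 1 else e a + 2)
    else if x = w1 ∨ x = w2 then (if a = m1 then 0 else e a + 2)
    else e a with hrank
  have rank_self : ∀ x, rank x x = N := by intro x; simp [hrank]
  have hlt : ∀ x a, a ≠ x → rank x a < N := by
    intro x a h
    have h2 := heN a
    simp only [hrank, if_neg h]
    split_ifs <;> omega
  have hinj : ∀ x a b, a ≠ x → b ≠ x → a ≠ b → rank x a ≠ rank x b := by
    intro x a b ha hb hab h
    simp only [hrank, if_neg ha, if_neg hb] at h
    split_ifs at h <;>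
      first
        | omega
        | exact hab (heinj (by omega))
        | simp_all
  have r_m1_w2 : rank m1 w2 = 0 := by
    simp [hrank, (hm1w2.symm : w2 ≠ m1)]
  have r_m1_w1 : rank m1 w1 = 1 := by
    simp [hrank, (hm1w1.symm : w1 ≠ m1), hw12]
  have r_m1_other : ∀ a, a ≠ m1 → a ≠ w1 → a ≠ w2 → rank m1 a = e a + 2 := by
    intro a h1 h2 h3
    simp [hrank, h1, h2, h3]
  have r_w_m1 : ∀ x, x = w1 ∨ x = w2 → rank x m1 = 0 := by
    intro x hx
    have hxm : ¬ (m1 = x) := by rcases hx with h | h <;> (subst h; first | exact hm1w1 | exact hm1w2)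
    have hxm1 : ¬ (x = m1) := fun h => hxm h.symm
    simp [hrank, hxm, hxm1, hx]
  have r_w_other : ∀ x a, x = w1 ∨ x = w2 → a ≠ x → a ≠ m1 → rank x a = e a + 2 := by
    intro x a hx ha ham
    have hxm1 : ¬ (x = m1) := by
      rcases hx with h | h
      · subst h; exact fun hh => hm1w1 hh.symm
      · subst h; exact fun hh => hm1w2 hh.symm
    simp only [hrank]
    rw [if_neg ha, if_neg hxm1, if_pos hx, if_neg ham]
  refine ⟨⟨fun x a b => rank x a < rank x b, fun x a => lt_irrefl _,
    fun x a b c h1 h2 => lt_trans h1 h2, ?_, ?_⟩, ?_⟩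
  · intro x a b haa hbb hab
    have ha : a ≠ x := fun h => haa (by rw [h])
    have hb : b ≠ x := fun h => hbb (by rw [h])
    exact Nat.lt_or_gt_of_ne (hinj x a b ha hb hab)
  · intro x a hax
    have ha : a ≠ x := fun h => hax (by rw [h])
    show rank x a < rank x x
    rw [rank_self]
    exact hlt x a ha
  intro σ hσ
  obtain ⟨M1, hB1⟩ := hσ {i}
  obtain ⟨MU, hBU⟩ := hσ Set.univ
  have mi : ∀ x, comm x = i → x ∈ {x | comm x ∈ ({i} : Set ι)} := by
    intro x h; simp [h]
  have mu : ∀ x, x ∈ {x | comm x ∈ (Set.univ : Set ι)} := by intro x; simp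
  -- Step A: in community i alone, m1 is matched to w1
  have hA : σ m1 {i} = w1 := by
    by_contra hne
    apply hB1
    have hne' : σ w1 {i} ≠ m1 := by
      intro hh
      have := M1.invol w1 (mi w1 hw1i)
      simp only [hh] at this
      exact hne this
    refine ⟨m1, mi m1 hm1i, w1, mi w1 hw1i, by simp [hm1, hw1], hne, ?_, ?_⟩
    · show rank m1 w1 < rank m1 (σ m1 {i})
      by_cases h : σ m1 {i} = m1
      · rw [h, rank_self, r_m1_w1]; omega
      · have hmem := M1.mem m1 (mi m1 hm1i)
        simp only [Set.mem_setOf_eq, Set.mem_singleton_iff] at hmem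
        have h3 : σ m1 {i} ≠ w2 := by
          intro hh; rw [hh] at hmem; exact hij (hw2j ▸ hmem ▸ rfl)
        rw [r_m1_w1, r_m1_other _ h hne h3]; omega
    · show rank w1 m1 < rank w1 (σ w1 {i})
      rw [r_w_m1 w1 (Or.inl rfl)]
      by_cases h : σ w1 {i} = w1
      · rw [h, rank_self]; omega
      · rw [r_w_other w1 _ (Or.inl rfl) h hne']; omega
  have hA' : σ w1 {i} = m1 := by
    have := M1.invol m1 (mi m1 hm1i)
    rw [hA] at this; exact this
  -- Step B: in the full society, m1 is matched to w2
  have hU : σ m1 Set.univ = w2 := by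
    by_contra hne
    apply hBU
    have hne' : σ w2 Set.univ ≠ m1 := by
      intro hh
      have := MU.invol w2 (mu w2)
      simp only [hh] at this
      exact hne this
    refine ⟨m1, mu m1, w2, mu w2, by simp [hm1, hw2], hne, ?_, ?_⟩
    · show rank m1 w2 < rank m1 (σ m1 Set.univ)
      rw [r_m1_w2]
      by_cases h : σ m1 Set.univ = m1
      · rw [h, rank_self]; omega
      · by_cases h2 : σ m1 Set.univ = w1
        · rw [h2, r_m1_w1]; omega
        · rw [r_m1_other _ h h2 hne]; omega
    · show rank w2 m1 < rank w2 (σ w2 Set.univ)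
      rw [r_w_m1 w2 (Or.inr rfl)]
      by_cases h : σ w2 Set.univ = w2
      · rw [h, rank_self]; omega
      · rw [r_w_other w2 _ (Or.inr rfl) h hne']; omega
  -- Conclusion: w1 is strictly worse off in the full society
  refine ⟨w1, ?_⟩
  have hne3 : σ w1 Set.univ ≠ m1 := by
    intro hh
    have := MU.invol w1 (mu w1)
    rw [hh, hU] at this
    exact hw12 this.symm
  show rank w1 (σ w1 {comm w1}) < rank w1 (σ w1 Set.univ)
  rw [hw1i, hA', r_w_m1 w1 (Or.inl rfl)]
  by_cases h : σ w1 Set.univ = w1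
  · rw [h, rank_self]; omega
  · rw [r_w_other w1 _ (Or.inl rfl) h hne3]; omega
end

section
/- Consider a society with two communities A and B, each consisting of one man and one woman (agents m^A, w^A, m^B, w^B), with preferences: both men prefer w^A to w^B, and both women prefer m^B to m^A. Then every stable matching scheme σ satisfies σ(w^A, {A}) = m^A, σ(w^B, {B}) = m^B, and σ(w^A, {A,B}) = m^B (hence σ(w^B,{A,B}) = m^A), so that both m^A and w^B strictly prefer the partner they obtain in their own community to the partner they obtain in the integrated society {A,B}. -/
/-- Genders in the four-agent example: agent 0 is `m^A`, agent 1 is `w^A`,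
agent 2 is `m^B`, agent 3 is `w^B`. -/
def man4 : Fin 4 → Bool := fun x => decide (x = 0) || decide (x = 2)

/-- Communities in the four-agent example: agents 0 and 1 form community `A` (0),
agents 2 and 3 form community `B` (1). -/
def comm4 : Fin 4 → Fin 2 := fun x => if x.val < 2 then 0 else 1

/-- **The example of Proposition 1.** With two communities `A = {m^A, w^A}` and
`B = {m^B, w^B}`, both men preferring `w^A` to `w^B` and both women preferring
`m^B` to `m^A`, every stable matching scheme `σ` satisfies
`σ(w^A, {A}) = m^A`, `σ(w^B, {B}) = m^B`, `σ(w^A, {A,B}) = m^B` and hence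
`σ(w^B, {A,B}) = m^A`, so both `m^A` and `w^B` strictly prefer their
own-community partner to the partner obtained in the integrated society. -/
theorem stable_scheme_hurts_mA_and_wB
    (P : Prefs (Fin 4) man4)
    (hmA : P.pref 0 1 3)  -- m^A prefers w^A to w^B
    (hmB : P.pref 2 1 3)  -- m^B prefers w^A to w^B
    (hwA : P.pref 1 2 0)  -- w^A prefers m^B to m^A
    (hwB : P.pref 3 2 0)  -- w^B prefers m^B to m^A
    (σ : Fin 4 → Set (Fin 2) → Fin 4)
    (hσ : ∀ Q : Set (Fin 2), IsStable P {x | comm4 x ∈ Q} (fun x => σ x Q)) :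
    σ 1 {0} = 0 ∧ σ 3 {1} = 2 ∧ σ 1 Set.univ = 2 ∧ σ 3 Set.univ = 0 ∧
      P.pref 0 (σ 0 {comm4 0}) (σ 0 Set.univ) ∧
      P.pref 3 (σ 3 {comm4 3}) (σ 3 Set.univ) := by

  have h4 : ∀ y : Fin 4, y = 0 ∨ y = 1 ∨ y = 2 ∨ y = 3 := by decide
  -- Population {A}
  obtain ⟨MA, SA⟩ := hσ {0}
  have memA : ∀ x : Fin 4, x ∈ {x : Fin 4 | comm4 x ∈ ({0} : Set (Fin 2))} ↔ (x = 0 ∨ x = 1) := by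
    intro x; fin_cases x <;> simp [comm4, Set.mem_setOf_eq] <;> omega
  have hσ10 : σ 1 {0} = 0 := by
    rcases h4 (σ 1 {0}) with h | h | h | h
    · exact h
    · -- σ 1 {0} = 1; then σ 0 {0} = 0 and (0,1) blocks
      have h0 : σ 0 {0} = 0 := by
        rcases (memA _).1 (MA.mem 0 ((memA 0).2 (Or.inl rfl))) with h0 | h0
        · exact h0
        · exfalso
          have := MA.invol 0 ((memA 0).2 (Or.inl rfl))
          simp only [h0, h] at this
          exact absurd this (by decide)
      exact absurd ⟨0, (memA 0).2 (Or.inl rfl), 1, (memA 1).2 (Or.inr rfl), by decide,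
        by simp only [h0]; decide, by simp only [h0]; exact P.worst 0 1 (by decide),
        by simp only [h]; exact P.worst 1 0 (by decide)⟩ SA
    · exact absurd ((memA _).1 (MA.mem 1 ((memA 1).2 (Or.inr rfl)))) (by simp only [h]; decide)
    · exact absurd ((memA _).1 (MA.mem 1 ((memA 1).2 (Or.inr rfl)))) (by simp only [h]; decide)
  -- Population {B}
  obtain ⟨MB, SB⟩ := hσ {1}
  have memB : ∀ x : Fin 4, x ∈ {x : Fin 4 | comm4 x ∈ ({1} : Set (Fin 2))} ↔ (x = 2 ∨ x = 3) := by
    intro x; fin_cases x <;> simp [comm4, Set.mem_setOf_eq] <;> omega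
  have hσ32 : σ 3 {1} = 2 := by
    rcases h4 (σ 3 {1}) with h | h | h | h
    · exact absurd ((memB _).1 (MB.mem 3 ((memB 3).2 (Or.inr rfl)))) (by simp only [h]; decide)
    · exact absurd ((memB _).1 (MB.mem 3 ((memB 3).2 (Or.inr rfl)))) (by simp only [h]; decide)
    · exact h
    · -- σ 3 {1} = 3; then σ 2 {1} = 2 and (2,3) blocks
      have h2 : σ 2 {1} = 2 := by
        rcases (memB _).1 (MB.mem 2 ((memB 2).2 (Or.inl rfl))) with h2 | h2
        · exact h2
        · exfalso
          have := MB.invol 2 ((memB 2).2 (Or.inl rfl))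
          simp only [h2, h] at this
          exact absurd this (by decide)
      exact absurd ⟨2, (memB 2).2 (Or.inl rfl), 3, (memB 3).2 (Or.inr rfl), by decide,
        by simp only [h2]; decide, by simp only [h2]; exact P.worst 2 3 (by decide),
        by simp only [h]; exact P.worst 3 2 (by decide)⟩ SB
  -- Population {A, B}
  obtain ⟨MU, SU⟩ := hσ Set.univ
  have memU : ∀ x : Fin 4, x ∈ {x : Fin 4 | comm4 x ∈ (Set.univ : Set (Fin 2))} := by
    intro x; simp [Set.mem_setOf_eq]
  have hσ1u : σ 1 Set.univ = 2 := by
    rcases h4 (σ 1 Set.univ) with h | h | h | h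
    · exfalso
      -- μ 1 = 0, (2,1) blocks
      have hμ2 : σ 2 Set.univ = 2 ∨ σ 2 Set.univ = 3 := by
        rcases h4 (σ 2 Set.univ) with h2 | h2 | h2 | h2
        · exact absurd (MU.opp 2 (memU 2) (by simp only [h2]; decide)) (by simp only [h2]; decide)
        · have := MU.invol 2 (memU 2); rw [h2, h] at this
          exact absurd this (by decide)
        · exact Or.inl h2
        · exact Or.inr h2
      have hp2 : P.pref 2 1 (σ 2 Set.univ) := by
        rcases hμ2 with h2 | h2
        · rw [h2]; exact P.worst 2 1 (by decide)
        · rw [h2]; exact hmB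
      exact SU ⟨2, memU 2, 1, memU 1, by decide,
        by rcases hμ2 with h2 | h2 <;> simp only [h2] <;> decide, hp2, by simp only [h]; exact hwA⟩
    · exfalso
      have hμ2 : σ 2 Set.univ = 2 ∨ σ 2 Set.univ = 3 := by
        rcases h4 (σ 2 Set.univ) with h2 | h2 | h2 | h2
        · exact absurd (MU.opp 2 (memU 2) (by simp only [h2]; decide)) (by simp only [h2]; decide)
        · have := MU.invol 2 (memU 2); rw [h2, h] at this
          exact absurd this (by decide)
        · exact Or.inl h2
        · exact Or.inr h2
      have hp2 : P.pref 2 1 (σ 2 Set.univ) := by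
        rcases hμ2 with h2 | h2
        · rw [h2]; exact P.worst 2 1 (by decide)
        · rw [h2]; exact hmB
      exact SU ⟨2, memU 2, 1, memU 1, by decide,
        by rcases hμ2 with h2 | h2 <;> simp only [h2] <;> decide, hp2,
        by simp only [h]; exact P.worst 1 2 (by decide)⟩
    · exact h
    · exact absurd (MU.opp 1 (memU 1) (by simp only [h]; decide)) (by simp only [h]; decide)
  have hμ2u : σ 2 Set.univ = 1 := by
    have := MU.invol 1 (memU 1); rw [hσ1u] at this; exact this
  have hσ3u : σ 3 Set.univ = 0 := by
    rcases h4 (σ 3 Set.univ) with h | h | h | h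
    · exact h
    · exact absurd (MU.opp 3 (memU 3) (by simp only [h]; decide)) (by simp only [h]; decide)
    · have := MU.invol 3 (memU 3); rw [h, hμ2u] at this
      exact absurd this (by decide)
    · exfalso
      -- μ 3 = 3, then μ 0 = 0 and (0,3) blocks
      have h0 : σ 0 Set.univ = 0 := by
        rcases h4 (σ 0 Set.univ) with h0 | h0 | h0 | h0
        · exact h0
        · have := MU.invol 0 (memU 0); rw [h0, hσ1u] at this
          exact absurd this (by decide)
        · exact absurd (MU.opp 0 (memU 0) (by simp only [h0]; decide)) (by simp only [h0]; decide)
        · have := MU.invol 0 (memU 0); rw [h0, h] at this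
          exact absurd this (by decide)
      exact SU ⟨0, memU 0, 3, memU 3, by decide, by simp only [h0]; decide,
        by simp only [h0]; exact P.worst 0 3 (by decide),
        by simp only [h]; exact P.worst 3 0 (by decide)⟩
  have hμ0u : σ 0 Set.univ = 3 := by
    have := MU.invol 3 (memU 3); rw [hσ3u] at this; exact this
  have hσ01 : σ 0 {0} = 1 := by
    have := MA.invol 1 ((memA 1).2 (Or.inr rfl)); rw [hσ10] at this; exact this
  have hc0 : comm4 0 = 0 := rfl
  have hc3 : comm4 3 = 1 := rfl
  refine ⟨hσ10, hσ32, hσ1u, hσ3u, ?_, ?_⟩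
  · rw [hc0, hσ01, hμ0u]; exact hmA
  · rw [hc3, hσ32, hσ3u]; exact hwB
end

section
/- For any society and strict preference profile, and any stable matching scheme σ*, the number of agents x who strictly prefer their partner in their own community to their partner in the fully integrated society — i.e. |{x ∈ M^S ∪ W^S : σ*(x, C_x) ≻_x σ*(x, S)}| — is at most half of the total number of agents |M^S ∪ W^S| / 2. -/
/-- **Proposition 3 (stable schemes hurt at most half of society).**
For any society (communities indexed by `ι`, pairwise disjoint, each with at
least one man and one woman), any strict preference profile, and any stable
matching scheme `σ`, the number of agents who strictly prefer the partner
obtained in their own community to the partner obtained in the fully integrated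
society is at most half of the total number of agents. -/
theorem stable_scheme_hurts_at_most_half
    {Agent ι : Type} [Fintype Agent] [Fintype ι]
    (man : Agent → Bool) (comm : Agent → ι)
    (hasMan : ∀ i : ι, ∃ x, comm x = i ∧ man x = true)
    (hasWoman : ∀ i : ι, ∃ x, comm x = i ∧ man x = false)
    (P : Prefs Agent man)
    (σ : Agent → Set ι → Agent)
    (hσ : ∀ Q : Set ι, IsStable P {x | comm x ∈ Q} (fun x => σ x Q)) :
    2 * Nat.card {x : Agent // P.pref x (σ x {comm x}) (σ x Set.univ)} ≤
      Fintype.card Agent := by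

  classical
  set μ : Agent → Agent := fun x => σ x Set.univ with hμdef
  set ν : Agent → Agent := fun x => σ x {comm x} with hνdef
  obtain ⟨hμm, hμs⟩ := hσ Set.univ
  have hcomm : ∀ x, comm (ν x) = comm x := by
    intro x
    have := (hσ {comm x}).1.mem x (by simp)
    simpa [hνdef] using this
  have hinvol : ∀ x, ν (ν x) = x := by
    intro x
    have h := (hσ {comm x}).1.invol x (by simp)
    simp only [hνdef, hcomm x]
    rw [show comm (σ x {comm x}) = comm x from hcomm x]; exact h
  set p : Agent → Prop := fun x => P.pref x (ν x) (μ x) with hpdef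
  have key : ∀ x, p x → ¬ p (ν x) := by
    intro x hx hy
    have hxne : ν x ≠ x := by
      intro h
      simp only [hpdef] at hx
      rw [h] at hx
      by_cases hμx : μ x = x
      · rw [hμx] at hx; exact P.irrefl x x hx
      · have hopp : man (μ x) ≠ man x := hμm.opp x (by simp) hμx
        exact P.irrefl x x (P.trans x x (μ x) x hx (P.worst x (μ x) hopp))
    have hman : man (ν x) ≠ man x := by
      have := (hσ {comm x}).1.opp x (by simp)
      simp only [hνdef] at this ⊢
      exact this hxne
    have hy' : P.pref (ν x) x (μ (ν x)) := by
      have := hy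
      simp only [hpdef, hinvol x] at this
      exact this
    have hμne : μ x ≠ ν x := by
      intro h
      simp only [hpdef] at hx
      rw [← h] at hx
      exact P.irrefl x (μ x) hx
    exact hμs ⟨x, by simp, ν x, by simp, Ne.symm hman, hμne, hx, hy'⟩
  have hf : Function.Injective (fun y : {x // p x} => (⟨ν y.1, key y.1 y.2⟩ : {x // ¬ p x})) := by
    intro a b hab
    have : ν a.1 = ν b.1 := congrArg Subtype.val hab
    have := congrArg ν this
    rw [hinvol, hinvol] at this
    exact Subtype.ext this
  have hle : Nat.card {x // p x} ≤ Nat.card {x // ¬ p x} :=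
    Nat.card_le_card_of_injective _ hf
  have hsum : Nat.card {x // p x} + Nat.card {x // ¬ p x} = Fintype.card Agent := by
    simp only [Nat.card_eq_fintype_card]
    rw [Fintype.card_subtype_compl]
    have := Fintype.card_subtype_le p
    omega
  have hgoal : 2 * Nat.card {x // p x} ≤ Fintype.card Agent := by omega
  exact hgoal
end

section
/- Let μ be a stable matching and ν an arbitrary matching on the same finite set of men and women (with strict preferences, and every agent preferring any partner to being unmatched). Then the number of agents x who strictly prefer ν(x) to μ(x) is at most the number of agents y who strictly prefer μ(y) to ν(y). -/
/-- **Key counting lemma.** Let `μ` be a stable matching and `ν` an arbitrary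
matching on the same finite set of agents (with strict preferences, every agent
preferring any partner to being unmatched). Then the number of agents who
strictly prefer `ν` to `μ` is at most the number of agents who strictly
prefer `μ` to `ν`. -/
theorem card_prefer_other_le_card_prefer_stable
    {Agent : Type} [Fintype Agent]
    (man : Agent → Bool) (P : Prefs Agent man)
    (μ ν : Agent → Agent)
    (hμ : IsStable P Set.univ μ)
    (hν : IsMatching man Set.univ ν) :
    Nat.card {x : Agent // P.pref x (ν x) (μ x)} ≤
      Nat.card {y : Agent // P.pref y (μ y) (ν y)} := by
  obtain ⟨hμm, hstab⟩ := hμ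
  have key : ∀ x, P.pref x (ν x) (μ x) → P.pref (ν x) (μ (ν x)) (ν (ν x)) := by
    intro x hx
    set w := ν x with hw
    -- ν x ≠ x
    have hνx : w ≠ x := by
      intro h
      rcases eq_or_ne (μ x) x with h' | h'
      · rw [h, h'] at hx; exact P.irrefl x x hx
      · have : P.pref x (μ x) x := P.worst x (μ x) (hμm.opp x trivial h')
        rw [h] at hx
        exact P.irrefl x x (P.trans x x (μ x) x hx this)
    have hman : man w ≠ man x := hν.opp x trivial hνx
    have hνw : ν w = x := hν.invol x trivial
    -- μ x ≠ w
    have hμx : μ x ≠ w := by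
      intro h; rw [h] at hx; exact P.irrefl x w hx
    -- μ w ≠ x
    have hμwx : μ w ≠ x := by
      intro h
      have := hμm.invol w trivial
      rw [h] at this
      exact hμx this
    -- there is no blocking pair (x, w), so ¬ pref w x (μ w)
    have hnb : ¬ P.pref w x (μ w) := by
      intro hb
      exact hstab ⟨x, trivial, w, trivial, hman.symm, hμx, hx, hb⟩
    rcases eq_or_ne (μ w) w with h' | h'
    · exact absurd (by rw [h']; exact P.worst w x hman.symm : P.pref w x (μ w)) hnb
    · have hopp : man (μ w) ≠ man w := hμm.opp w trivial h'
      have hoppx : man x ≠ man w := hman.symm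
      rcases P.total w (μ w) x hopp hoppx hμwx with h | h
      · rw [hνw]; exact h
      · exact absurd h hnb
  have hinj : Function.Injective
      (fun p : {x : Agent // P.pref x (ν x) (μ x)} =>
        (⟨ν p.1, key p.1 p.2⟩ : {y : Agent // P.pref y (μ y) (ν y)})) := by
    rintro ⟨a, ha⟩ ⟨b, hb⟩ h
    simp only [Subtype.mk.injEq] at h ⊢
    have := congrArg ν h
    rwa [hν.invol a trivial, hν.invol b trivial] at this
  exact Nat.card_le_card_of_injective _ hinj
end

section
/- For every society consisting of at least three pairwise disjoint communities (each community containing at least one man and at least one woman), there exists a strict preference profile such that no Pareto optimal matching scheme is integration monotonic; that is, for every matching scheme σ such that σ(·,P) is a Pareto optimal matching for every population P, there exist disjoint populations P and P' and an agent x ∈ P such that x strictly prefers σ(x,P) to σ(x, P ∪ P'). Equivalently, no Pareto optimal matching mechanism is integration monotonic. -/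
set_option linter.unusedSectionVars false

section KeyAux
variable {Agent : Type} [Fintype Agent]

noncomputable def keyF (sc : Agent → Agent → ℕ) (x a : Agent) : ℕ :=
  (Fintype.equivFin Agent a).val + sc x a * Fintype.card Agent

lemma keyF_lt_of_sc {sc : Agent → Agent → ℕ} {x a b : Agent} (h : sc x a < sc x b) :
    keyF sc x a < keyF sc x b := by
  have ha : ((Fintype.equivFin Agent a).val : ℕ) < Fintype.card Agent :=
    (Fintype.equivFin Agent a).isLt
  unfold keyF
  calc (Fintype.equivFin Agent a).val + sc x a * Fintype.card Agent
      < Fintype.card Agent + sc x a * Fintype.card Agent :=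
        Nat.add_lt_add_right ha _
    _ = (sc x a + 1) * Fintype.card Agent := by ring
    _ ≤ sc x b * Fintype.card Agent := Nat.mul_le_mul_right _ (by omega)
    _ ≤ (Fintype.equivFin Agent b).val + sc x b * Fintype.card Agent := Nat.le_add_left _ _

lemma keyF_inj {sc : Agent → Agent → ℕ} {x a b : Agent} (h : keyF sc x a = keyF sc x b) :
    a = b := by
  have ha := (Fintype.equivFin Agent a).isLt
  have hb := (Fintype.equivFin Agent b).isLt
  have hv : ((Fintype.equivFin Agent a).val) = (Fintype.equivFin Agent b).val := by
    have h2 := congrArg (· % Fintype.card Agent) h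
    simpa [keyF, Nat.add_mul_mod_self_right, Nat.mod_eq_of_lt ha, Nat.mod_eq_of_lt hb] using h2
  exact (Fintype.equivFin Agent).injective (Fin.val_injective hv)

lemma sc_le_of_keyF_le {sc : Agent → Agent → ℕ} {x a b : Agent}
    (h : keyF sc x a ≤ keyF sc x b) : sc x a ≤ sc x b := by
  by_contra hc
  have := keyF_lt_of_sc (sc := sc) (x := x) (a := b) (b := a) (by omega)
  omega

noncomputable def mkPrefs (man : Agent → Bool) (sc : Agent → Agent → ℕ) : Prefs Agent man where
  pref x a b := man a ≠ man x ∧ (man b = man x ∨ keyF sc x a < keyF sc x b)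
  irrefl := by
    rintro x a ⟨h1, h2 | h2⟩
    · exact h1 h2
    · exact lt_irrefl _ h2
  trans := by
    rintro x a b c ⟨ha, hab⟩ ⟨hb, hbc⟩
    refine ⟨ha, ?_⟩
    rcases hbc with hc | hbc
    · exact Or.inl hc
    rcases hab with hb' | hab
    · exact absurd hb' hb
    · exact Or.inr (lt_trans hab hbc)
  total := by
    intro x a b ha hb hne
    rcases lt_trichotomy (keyF sc x a) (keyF sc x b) with h | h | h
    · exact Or.inl ⟨ha, Or.inr h⟩
    · exact absurd (keyF_inj h) hne
    · exact Or.inr ⟨hb, Or.inr h⟩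
  worst := fun x a h => ⟨h, Or.inl rfl⟩

lemma mkPrefs_pref_iff {man : Agent → Bool} {sc : Agent → Agent → ℕ} {x a b : Agent} :
    (mkPrefs man sc).pref x a b ↔
      (man a ≠ man x ∧ (man b = man x ∨ keyF sc x a < keyF sc x b)) := Iff.rfl

lemma mkPrefs_pref_of_sc {man : Agent → Bool} {sc : Agent → Agent → ℕ} {x a b : Agent}
    (h1 : man a ≠ man x) (h2 : sc x a < sc x b) : (mkPrefs man sc).pref x a b :=
  ⟨h1, Or.inr (keyF_lt_of_sc h2)⟩

lemma mkPrefs_sc_le {man : Agent → Bool} {sc : Agent → Agent → ℕ} {x a b : Agent}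
    (h : (mkPrefs man sc).pref x a b) (hb : man b ≠ man x) : sc x a ≤ sc x b := by
  rcases h with ⟨h1, h2 | h2⟩
  · exact absurd h2 hb
  · exact sc_le_of_keyF_le (le_of_lt h2)

lemma mkPrefs_man {man : Agent → Bool} {sc : Agent → Agent → ℕ} {x a b : Agent}
    (h : (mkPrefs man sc).pref x a b) : man a ≠ man x := h.1

end KeyAux

def rk3 {ι : Type} [DecidableEq ι] (i1 i2 i3 i j : ι) : ℕ :=
  if i = i1 then (if j = i2 then 0 else if j = i3 then 1 else if j = i1 then 2 else 3)
  else if i = i2 then (if j = i3 then 0 else if j = i1 then 1 else if j = i2 then 2 else 3)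
  else if i = i3 then (if j = i1 then 0 else if j = i2 then 1 else if j = i3 then 2 else 3)
  else 0

section Improve
variable {Agent : Type} [DecidableEq Agent] {man : Agent → Bool}

lemma pair_up (P : Prefs Agent man)
    {A : Set Agent} {μ : Agent → Agent} (h : IsPareto P A μ)
    {m w : Agent} (hm : m ∈ A) (hw : w ∈ A) (hg : man w ≠ man m)
    (hm0 : μ m = m) (hw0 : μ w = w) : False := by
  have hne : m ≠ w := fun e => hg (congrArg man e).symm
  apply h.2
  refine ⟨fun z => if z = m then w else if z = w then m else μ z, ⟨?_, ?_, ?_, ?_⟩, ?_, m, hm, ?_⟩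
  · intro x hx
    try dsimp only
    split_ifs
    · exact hw
    · exact hm
    · exact h.1.mem x hx
  · intro x hx
    try dsimp only
    by_cases h1 : x = m
    · subst h1
      rw [if_pos rfl, if_neg (Ne.symm hne), if_pos rfl]
    by_cases h2 : x = w
    · subst h2
      rw [if_neg h1, if_pos rfl, if_pos rfl]
    · rw [if_neg h1, if_neg h2]
      have hinv := h.1.invol x hx
      have hμ1 : μ x ≠ m := by
        intro e
        rw [e, hm0] at hinv
        exact h1 hinv.symm
      have hμ2 : μ x ≠ w := by
        intro e
        rw [e, hw0] at hinv
        exact h2 hinv.symm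
      rw [if_neg hμ1, if_neg hμ2, hinv]
  · intro x hx hne'
    try dsimp only at hne' ⊢
    by_cases h1 : x = m
    · subst h1; rw [if_pos rfl]; exact hg
    by_cases h2 : x = w
    · subst h2; rw [if_neg h1, if_pos rfl]; exact Ne.symm hg
    · rw [if_neg h1, if_neg h2] at hne' ⊢
      exact h.1.opp x hx hne'
  · intro x hx
    have h1 : x ≠ m := fun e => hx (e ▸ hm)
    have h2 : x ≠ w := fun e => hx (e ▸ hw)
    try dsimp only
    rw [if_neg h1, if_neg h2]
    exact h.1.fix x hx
  · intro x hx
    try dsimp only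
    by_cases h1 : x = m
    · subst h1
      rw [if_pos rfl, hm0]
      exact Or.inr (P.worst _ _ hg)
    by_cases h2 : x = w
    · subst h2
      rw [if_neg h1, if_pos rfl, hw0]
      exact Or.inr (P.worst _ _ (Ne.symm hg))
    · rw [if_neg h1, if_neg h2]
      exact Or.inl rfl
  · try dsimp only
    rw [if_pos rfl, hm0]
    exact P.worst m w hg

lemma swap_pairs (P : Prefs Agent man)
    {A : Set Agent} {μ : Agent → Agent} (h : IsPareto P A μ)
    {m w m' w' : Agent} (hm : m ∈ A) (hm' : m' ∈ A)
    (hmw : μ m = w) (hm'w' : μ m' = w')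
    (hman_m : man m = true) (hman_m' : man m' = true)
    (hman_w : man w = false) (hman_w' : man w' = false)
    (p1 : P.pref m w' w) (p2 : P.pref m' w w')
    (p3 : P.pref w m' m) (p4 : P.pref w' m m') : False := by
  have hwA : w ∈ A := hmw ▸ h.1.mem m hm
  have hw'A : w' ∈ A := hm'w' ▸ h.1.mem m' hm'
  have hinvw : μ w = m := by have := h.1.invol m hm; rwa [hmw] at this
  have hinvw' : μ w' = m' := by have := h.1.invol m' hm'; rwa [hm'w'] at this
  have hwm : w ≠ m := fun e => by rw [e, hman_m] at hman_w; exact Bool.noConfusion hman_w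
  have hw'm' : w' ≠ m' := fun e => by rw [e, hman_m'] at hman_w'; exact Bool.noConfusion hman_w'
  have hwm' : w ≠ m' := fun e => by rw [e, hman_m'] at hman_w; exact Bool.noConfusion hman_w
  have hw'm : w' ≠ m := fun e => by rw [e, hman_m] at hman_w'; exact Bool.noConfusion hman_w'
  have hmm' : m ≠ m' := by
    intro e
    rw [← e, hmw] at hm'w'
    rw [hm'w'] at p1
    exact P.irrefl _ _ p1
  have hww' : w ≠ w' := by
    intro e
    apply hmm'
    rw [← hinvw, ← hinvw', e]
  apply h.2
  refine ⟨fun z => if z = m then w' else if z = w' then m else if z = m' then w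
      else if z = w then m' else μ z, ⟨?_, ?_, ?_, ?_⟩, ?_, m, hm, ?_⟩
  · intro x hx
    try dsimp only
    split_ifs
    · exact hw'A
    · exact hm
    · exact hwA
    · exact hm'
    · exact h.1.mem x hx
  · intro x hx
    try dsimp only
    by_cases h1 : x = m
    · subst h1
      rw [if_pos rfl, if_neg hw'm, if_pos rfl]
    by_cases h2 : x = w'
    · subst h2
      rw [if_neg h1, if_pos rfl, if_pos rfl]
    by_cases h3 : x = m'
    · subst h3
      rw [if_neg h1, if_neg h2, if_pos rfl, if_neg hwm, if_neg hww', if_neg hwm', if_pos rfl]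
    by_cases h4 : x = w
    · subst h4
      rw [if_neg h1, if_neg h2, if_neg h3, if_pos rfl, if_neg hmm'.symm, if_neg hw'm'.symm,
        if_pos rfl]
    · rw [if_neg h1, if_neg h2, if_neg h3, if_neg h4]
      have hinv := h.1.invol x hx
      have n1 : μ x ≠ m := by intro e; rw [e, hmw] at hinv; exact h4 hinv.symm
      have n2 : μ x ≠ w' := by intro e; rw [e, hinvw'] at hinv; exact h3 hinv.symm
      have n3 : μ x ≠ m' := by intro e; rw [e, hm'w'] at hinv; exact h2 hinv.symm
      have n4 : μ x ≠ w := by intro e; rw [e, hinvw] at hinv; exact h1 hinv.symm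
      rw [if_neg n1, if_neg n2, if_neg n3, if_neg n4, hinv]
  · intro x hx hne'
    try dsimp only at hne' ⊢
    by_cases h1 : x = m
    · subst h1; rw [if_pos rfl, hman_w', hman_m]; exact Bool.noConfusion
    by_cases h2 : x = w'
    · subst h2; rw [if_neg h1, if_pos rfl, hman_w', hman_m]; exact fun e => Bool.noConfusion e.symm
    by_cases h3 : x = m'
    · subst h3; rw [if_neg h1, if_neg h2, if_pos rfl, hman_w, hman_m']; exact Bool.noConfusion
    by_cases h4 : x = w
    · subst h4
      rw [if_neg h1, if_neg h2, if_neg h3, if_pos rfl, hman_w, hman_m']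
      exact fun e => Bool.noConfusion e.symm
    · rw [if_neg h1, if_neg h2, if_neg h3, if_neg h4] at hne' ⊢
      exact h.1.opp x hx hne'
  · intro x hx
    have h1 : x ≠ m := fun e => hx (e ▸ hm)
    have h2 : x ≠ w' := fun e => hx (e ▸ hw'A)
    have h3 : x ≠ m' := fun e => hx (e ▸ hm')
    have h4 : x ≠ w := fun e => hx (e ▸ hwA)
    try dsimp only
    rw [if_neg h1, if_neg h2, if_neg h3, if_neg h4]
    exact h.1.fix x hx
  · intro x hx
    try dsimp only
    by_cases h1 : x = m
    · subst h1; rw [if_pos rfl, hmw]; exact Or.inr p1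
    by_cases h2 : x = w'
    · subst h2; rw [if_neg h1, if_pos rfl, hinvw']; exact Or.inr p4
    by_cases h3 : x = m'
    · subst h3; rw [if_neg h1, if_neg h2, if_pos rfl, hm'w']; exact Or.inr p2
    by_cases h4 : x = w
    · subst h4; rw [if_neg h1, if_neg h2, if_neg h3, if_pos rfl, hinvw]; exact Or.inr p3
    · rw [if_neg h1, if_neg h2, if_neg h3, if_neg h4]
      exact Or.inl rfl
  · try dsimp only
    rw [if_pos rfl, hmw]
    exact p1

end Improve

section Count
variable {Agent ι : Type} [Fintype Agent] [DecidableEq Agent] [DecidableEq ι]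

def msetF (man : Agent → Bool) (comm : Agent → ι) (i : ι) : Finset Agent :=
  Finset.univ.filter (fun a => comm a = i ∧ man a = true)

def wsetF (man : Agent → Bool) (comm : Agent → ι) (i : ι) : Finset Agent :=
  Finset.univ.filter (fun a => comm a = i ∧ man a = false)

def nsz (man : Agent → Bool) (comm : Agent → ι) (i : ι) : ℕ :=
  min (msetF man comm i).card (wsetF man comm i).card

def mmatchF (man : Agent → Bool) (comm : Agent → ι) (μ : Agent → Agent) (i : ι) : Finset Agent :=
  (msetF man comm i).filter (fun a => μ a ≠ a)

def wmatchF (man : Agent → Bool) (comm : Agent → ι) (μ : Agent → Agent) (i : ι) : Finset Agent :=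
  (wsetF man comm i).filter (fun a => μ a ≠ a)

lemma mem_msetF {man : Agent → Bool} {comm : Agent → ι} {i : ι} {a : Agent} :
    a ∈ msetF man comm i ↔ comm a = i ∧ man a = true := by
  simp [msetF]

lemma mem_wsetF {man : Agent → Bool} {comm : Agent → ι} {i : ι} {a : Agent} :
    a ∈ wsetF man comm i ↔ comm a = i ∧ man a = false := by
  simp [wsetF]

lemma mem_mmatchF {man : Agent → Bool} {comm : Agent → ι} {μ : Agent → Agent} {i : ι} {a : Agent} :
    a ∈ mmatchF man comm μ i ↔ (comm a = i ∧ man a = true) ∧ μ a ≠ a := by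
  simp [mmatchF, mem_msetF, Finset.mem_filter]

lemma mem_wmatchF {man : Agent → Bool} {comm : Agent → ι} {μ : Agent → Agent} {i : ι} {a : Agent} :
    a ∈ wmatchF man comm μ i ↔ (comm a = i ∧ man a = false) ∧ μ a ≠ a := by
  simp [wmatchF, mem_wsetF, Finset.mem_filter]

lemma matched_cards {man : Agent → Bool} {comm : Agent → ι} (P : Prefs Agent man) {i : ι}
    {μ : Agent → Agent} (h : IsPareto P {x | comm x ∈ ({i} : Set ι)} μ) :
    (mmatchF man comm μ i).card = nsz man comm i ∧
    (wmatchF man comm μ i).card = nsz man comm i ∧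
    ((msetF man comm i).card ≤ (wsetF man comm i).card →
      mmatchF man comm μ i = msetF man comm i) ∧
    ((wsetF man comm i).card ≤ (msetF man comm i).card →
      wmatchF man comm μ i = wsetF man comm i) := by
  have popmem : ∀ a : Agent, comm a = i → a ∈ {x | comm x ∈ ({i} : Set ι)} := by
    intro a ha
    simp [Set.mem_setOf_eq, ha]
  have hcomm : ∀ a : Agent, comm a = i → comm (μ a) = i := by
    intro a ha
    have := h.1.mem a (popmem a ha)
    simpa [Set.mem_setOf_eq] using this
  have hbij : (mmatchF man comm μ i).card = (wmatchF man comm μ i).card := by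
    apply Finset.card_bij' (fun a _ => μ a) (fun b _ => μ b)
    · intro a ha
      rw [mem_mmatchF] at ha
      obtain ⟨⟨hca, hma⟩, hmat⟩ := ha
      rw [mem_wmatchF]
      have hop := h.1.opp a (popmem a hca) hmat
      refine ⟨⟨hcomm a hca, ?_⟩, ?_⟩
      · rw [hma] at hop
        simpa using hop
      · rw [h.1.invol a (popmem a hca)]
        exact Ne.symm hmat
    · intro b hb
      rw [mem_wmatchF] at hb
      obtain ⟨⟨hcb, hwb⟩, hmat⟩ := hb
      rw [mem_mmatchF]
      have hop := h.1.opp b (popmem b hcb) hmat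
      refine ⟨⟨hcomm b hcb, ?_⟩, ?_⟩
      · rw [hwb] at hop
        simpa using hop
      · rw [h.1.invol b (popmem b hcb)]
        exact Ne.symm hmat
    · intro a ha
      rw [mem_mmatchF] at ha
      exact h.1.invol a (popmem a ha.1.1)
    · intro b hb
      rw [mem_wmatchF] at hb
      exact h.1.invol b (popmem b hb.1.1)
  have hmsub : mmatchF man comm μ i ⊆ msetF man comm i := Finset.filter_subset _ _
  have hwsub : wmatchF man comm μ i ⊆ wsetF man comm i := Finset.filter_subset _ _
  by_cases hex : ∃ m ∈ msetF man comm i, μ m = m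
  · obtain ⟨m, hmS, hm0⟩ := hex
    rw [mem_msetF] at hmS
    have hwall : ∀ w ∈ wsetF man comm i, μ w ≠ w := by
      intro w hwS hw0
      rw [mem_wsetF] at hwS
      exact pair_up P h (popmem m hmS.1) (popmem w hwS.1)
        (by rw [hmS.2, hwS.2]; exact Bool.noConfusion) hm0 hw0
    have hwm : wmatchF man comm μ i = wsetF man comm i := by
      apply Finset.filter_eq_self.mpr hwall
    have hle : (wsetF man comm i).card ≤ (msetF man comm i).card := by
      calc (wsetF man comm i).card = (mmatchF man comm μ i).card := by rw [hbij, hwm]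
        _ ≤ (msetF man comm i).card := Finset.card_le_card hmsub
    have hnsz : nsz man comm i = (wsetF man comm i).card := min_eq_right hle
    refine ⟨by rw [hbij, hwm, hnsz], by rw [hwm, hnsz], ?_, fun _ => hwm⟩
    · intro hms
      apply Finset.eq_of_subset_of_card_le hmsub
      rw [hbij, hwm]
      omega
  · push_neg at hex
    have hmm : mmatchF man comm μ i = msetF man comm i := Finset.filter_eq_self.mpr hex
    have hle : (msetF man comm i).card ≤ (wsetF man comm i).card := by
      calc (msetF man comm i).card = (wmatchF man comm μ i).card := by rw [← hbij, hmm]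
        _ ≤ (wsetF man comm i).card := Finset.card_le_card hwsub
    have hnsz : nsz man comm i = (msetF man comm i).card := min_eq_left hle
    refine ⟨by rw [hmm, hnsz], by rw [← hbij, hmm, hnsz], fun _ => hmm, ?_⟩
    · intro hws
      apply Finset.eq_of_subset_of_card_le hwsub
      rw [← hbij, hmm]
      omega

end Count

set_option linter.unusedSectionVars false

section NoIntra
variable {Agent ι : Type} [Fintype Agent] [DecidableEq Agent] [DecidableEq ι]

/-- If the sizes are right (`nsz i ≤ nsz j`) and preferences make the pair of communities
`i`, `j` mutually exogamous, then in a Pareto optimal matching on the joint population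
no man of community `i` can be matched within community `i`. -/
lemma no_intra_host {man : Agent → Bool} {comm : Agent → ι} (P : Prefs Agent man)
    {i j : ι} (hij : i ≠ j) {μj μij : Agent → Agent}
    (hPj : IsPareto P {x | comm x ∈ ({j} : Set ι)} μj)
    (hPij : IsPareto P {x | comm x ∈ ({i, j} : Set ι)} μij)
    (hpers : ∀ a, comm a = j → μj a ≠ a → μij a ≠ a)
    (hn : nsz man comm i ≤ nsz man comm j)
    (hp1 : ∀ m w w', comm m = i → comm w = i → comm w' = j →
      man m = true → man w = false → man w' = false → P.pref m w' w)
    (hp2 : ∀ m' w w', comm m' = j → comm w = i → comm w' = j →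
      man m' = true → man w = false → man w' = false → P.pref m' w w')
    (hp3 : ∀ w m m', comm w = i → comm m = i → comm m' = j →
      man w = false → man m = true → man m' = true → P.pref w m' m)
    (hp4 : ∀ w' m m', comm w' = j → comm m = i → comm m' = j →
      man w' = false → man m = true → man m' = true → P.pref w' m m') :
    ∀ m, comm m = i → man m = true → μij m ≠ m → comm (μij m) ≠ i := by
  have popi : ∀ a : Agent, comm a = i → a ∈ {x | comm x ∈ ({i, j} : Set ι)} := by
    intro a ha; simp [Set.mem_setOf_eq, ha]
  have popj : ∀ a : Agent, comm a = j → a ∈ {x | comm x ∈ ({i, j} : Set ι)} := by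
    intro a ha; simp [Set.mem_setOf_eq, ha]
  have hcmem : ∀ a : Agent, a ∈ {x | comm x ∈ ({i, j} : Set ι)} →
      comm (μij a) = i ∨ comm (μij a) = j := by
    intro a ha
    have := hPij.1.mem a ha
    simpa [Set.mem_setOf_eq] using this
  intro m hcm hmanm hmm hcc
  set w := μij m with hwdef
  have hmpop := popi m hcm
  have hwman : man w = false := by
    have := hPij.1.opp m hmpop hmm
    rw [hmanm] at this
    simpa using this
  have hinvw : μij w = m := hPij.1.invol m hmpop
  -- no guest man is matched within community j
  have gni : ∀ m', comm m' = j → man m' = true → μij m' ≠ m' → comm (μij m') ≠ j := by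
    intro m' h1 h2 h3 h4
    have hm'pop := popj m' h1
    have hw'man : man (μij m') = false := by
      have := hPij.1.opp m' hm'pop h3
      rw [h2] at this
      simpa using this
    exact swap_pairs P hPij hmpop hm'pop hwdef.symm rfl hmanm h2 hwman hw'man
      (hp1 m w (μij m') hcm hcc h4 hmanm hwman hw'man)
      (hp2 m' w (μij m') h1 hcc h4 h2 hwman hw'man)
      (hp3 w m m' hcc hcm h1 hwman hmanm h2)
      (hp4 (μij m') m m' h4 hcm h1 hw'man hmanm h2)
  -- hence no guest woman either
  have gniW : ∀ b, comm b = j → man b = false → μij b ≠ b → comm (μij b) ≠ j := by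
    intro b h1 h2 h3 h4
    have hbpop := popj b h1
    have hinvb : μij (μij b) = b := hPij.1.invol b hbpop
    have hman' : man (μij b) = true := by
      have := hPij.1.opp b hbpop h3
      rw [h2] at this
      simpa using this
    refine gni (μij b) h4 hman' ?_ (by rw [hinvb]; exact h1)
    rw [hinvb]
    exact Ne.symm h3
  -- injection from matched guest men into host women
  have hinjOnM : Set.InjOn μij ↑(mmatchF man comm μj j) := by
    intro a ha b hb he
    rw [Finset.mem_coe, mem_mmatchF] at ha hb
    have := hPij.1.invol a (popj a ha.1.1)
    rw [he, hPij.1.invol b (popj b hb.1.1)] at this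
    exact this.symm
  have hinjOnW : Set.InjOn μij ↑(wmatchF man comm μj j) := by
    intro a ha b hb he
    rw [Finset.mem_coe, mem_wmatchF] at ha hb
    have := hPij.1.invol a (popj a ha.1.1)
    rw [he, hPij.1.invol b (popj b hb.1.1)] at this
    exact this.symm
  have hmapM : ∀ a ∈ mmatchF man comm μj j, μij a ∈ wsetF man comm i := by
    intro a ha
    rw [mem_mmatchF] at ha
    obtain ⟨⟨hca, hma⟩, hmata⟩ := ha
    have hmat := hpers a hca hmata
    have hop := hPij.1.opp a (popj a hca) hmat
    rw [hma] at hop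
    rw [mem_wsetF]
    refine ⟨?_, by simpa using hop⟩
    rcases hcmem a (popj a hca) with h | h
    · exact h
    · exact absurd h (gni a hca hma hmat)
  have hmapW : ∀ b ∈ wmatchF man comm μj j, μij b ∈ msetF man comm i := by
    intro b hb
    rw [mem_wmatchF] at hb
    obtain ⟨⟨hcb, hwb⟩, hmatb⟩ := hb
    have hmat := hpers b hcb hmatb
    have hop := hPij.1.opp b (popj b hcb) hmat
    rw [hwb] at hop
    rw [mem_msetF]
    refine ⟨?_, by simpa using hop⟩
    rcases hcmem b (popj b hcb) with h | h
    · exact h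
    · exact absurd h (gniW b hcb hwb hmat)
  obtain ⟨hMc, hWc, -, -⟩ := matched_cards P hPj
  have hcard1 : nsz man comm j ≤ (wsetF man comm i).card := by
    rw [← hMc]
    exact Finset.card_le_card_of_injOn μij hmapM hinjOnM
  have hcard2 : nsz man comm j ≤ (msetF man comm i).card := by
    rw [← hWc]
    exact Finset.card_le_card_of_injOn μij hmapW hinjOnW
  have heq : nsz man comm i = nsz man comm j :=
    le_antisymm hn (le_min hcard2 hcard1)
  by_cases hws : (wsetF man comm i).card ≤ (msetF man comm i).card
  · -- host women are the short side; they are exhausted by guest men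
    have hni : nsz man comm i = (wsetF man comm i).card := min_eq_right hws
    have himgsub : (mmatchF man comm μj j).image μij ⊆ wsetF man comm i :=
      Finset.image_subset_iff.mpr hmapM
    have hcardim : ((mmatchF man comm μj j).image μij).card = (mmatchF man comm μj j).card :=
      Finset.card_image_of_injOn hinjOnM
    have himg : (mmatchF man comm μj j).image μij = wsetF man comm i := by
      apply Finset.eq_of_subset_of_card_le himgsub
      rw [hcardim, hMc]
      omega
    have hwin : w ∈ wsetF man comm i := mem_wsetF.mpr ⟨hcc, hwman⟩
    rw [← himg, Finset.mem_image] at hwin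
    obtain ⟨a, haS, hae⟩ := hwin
    rw [mem_mmatchF] at haS
    have hwa : μij w = a := by
      have := hPij.1.invol a (popj a haS.1.1)
      rw [hae] at this
      exact this
    rw [hinvw] at hwa
    apply hij
    rw [← hcm, hwa]
    exact haS.1.1
  · -- host men are the short side; they are exhausted by guest women
    have hms : (msetF man comm i).card ≤ (wsetF man comm i).card := le_of_not_ge hws
    have hni : nsz man comm i = (msetF man comm i).card := min_eq_left hms
    have himgsub : (wmatchF man comm μj j).image μij ⊆ msetF man comm i :=
      Finset.image_subset_iff.mpr hmapW
    have hcardim : ((wmatchF man comm μj j).image μij).card = (wmatchF man comm μj j).card :=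
      Finset.card_image_of_injOn hinjOnW
    have himg : (wmatchF man comm μj j).image μij = msetF man comm i := by
      apply Finset.eq_of_subset_of_card_le himgsub
      rw [hcardim, hWc]
      omega
    have hmin : m ∈ msetF man comm i := mem_msetF.mpr ⟨hcm, hmanm⟩
    rw [← himg, Finset.mem_image] at hmin
    obtain ⟨b, hbT, hbe⟩ := hmin
    rw [mem_wmatchF] at hbT
    have hmb : μij m = b := by
      have := hPij.1.invol b (popj b hbT.1.1)
      rw [hbe] at this
      exact this
    rw [← hwdef] at hmb
    apply hij
    rw [← hcc, hmb]
    exact hbT.1.1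

end NoIntra



/-- **Proposition 2 (no Pareto optimal matching mechanism is IM).**
For every society consisting of at least three pairwise disjoint communities
(indexed by `ι`, each containing at least one man and at least one woman),
there exists a strict preference profile such that for every Pareto optimal
matching scheme `σ` there are disjoint populations `Q, Q'` and an agent `x`
belonging to (a community of) `Q` who strictly prefers `σ (x, Q)` to
`σ (x, Q ∪ Q')`. -/
theorem no_pareto_scheme_is_integration_monotonic
    {Agent ι : Type} [Fintype Agent] [Fintype ι]
    (man : Agent → Bool) (comm : Agent → ι)
    (hasMan : ∀ i : ι, ∃ x, comm x = i ∧ man x = true)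
    (hasWoman : ∀ i : ι, ∃ x, comm x = i ∧ man x = false)
    (hκ : 3 ≤ Fintype.card ι) :
    ∃ P : Prefs Agent man,
      ∀ σ : Agent → Set ι → Agent,
        (∀ Q : Set ι, IsPareto P {x | comm x ∈ Q} (fun x => σ x Q)) →
        ∃ (Q Q' : Set ι) (x : Agent), Disjoint Q Q' ∧ comm x ∈ Q ∧
          P.pref x (σ x Q) (σ x (Q ∪ Q')) := by
  classical
  -- three distinct communities
  have hcard : 3 ≤ (Finset.univ : Finset ι).card := by simpa using hκ
  obtain ⟨t, -, htc⟩ := Finset.exists_subset_card_eq hcard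
  obtain ⟨a, b, c, hab, hac, hbc, rfl⟩ := Finset.card_eq_three.mp htc
  -- sort them by community size
  obtain ⟨i1, i2, i3, h12, h13, h23, hn1, hn2⟩ :
      ∃ i1 i2 i3 : ι, i1 ≠ i2 ∧ i1 ≠ i3 ∧ i2 ≠ i3 ∧
        nsz man comm i1 ≤ nsz man comm i2 ∧ nsz man comm i2 ≤ nsz man comm i3 := by
    rcases le_total (nsz man comm a) (nsz man comm b) with h1 | h1 <;>
      rcases le_total (nsz man comm b) (nsz man comm c) with h2 | h2 <;>
      rcases le_total (nsz man comm a) (nsz man comm c) with h3 | h3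
    · exact ⟨a, b, c, hab, hac, hbc, h1, h2⟩
    · exact ⟨a, b, c, hab, hac, hbc, h1, h2⟩
    · exact ⟨a, c, b, hac, hab, Ne.symm hbc, h3, h2⟩
    · exact ⟨c, a, b, Ne.symm hac, Ne.symm hbc, hab, h3, h1⟩
    · exact ⟨b, a, c, Ne.symm hab, hbc, hac, h1, h3⟩
    · exact ⟨b, c, a, hbc, Ne.symm hab, Ne.symm hac, h2, h3⟩
    · exact ⟨c, b, a, Ne.symm hbc, Ne.symm hac, Ne.symm hab, h2, h1⟩
    · exact ⟨c, b, a, Ne.symm hbc, Ne.symm hac, Ne.symm hab, h2, h1⟩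
  -- evaluation of the cyclic rank function
  have e12 : rk3 i1 i2 i3 i1 i2 = 0 := by simp [rk3, h12, h13, h23]
  have e13 : rk3 i1 i2 i3 i1 i3 = 1 := by
    simp [rk3, h12, h13, h23, Ne.symm h12, Ne.symm h13, Ne.symm h23]
  have e11 : rk3 i1 i2 i3 i1 i1 = 2 := by
    simp [rk3, h12, h13, h23, Ne.symm h12, Ne.symm h13, Ne.symm h23]
  have e23 : rk3 i1 i2 i3 i2 i3 = 0 := by
    simp [rk3, h12, h13, h23, Ne.symm h12, Ne.symm h13, Ne.symm h23]
  have e21 : rk3 i1 i2 i3 i2 i1 = 1 := by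
    simp [rk3, h12, h13, h23, Ne.symm h12, Ne.symm h13, Ne.symm h23]
  have e22 : rk3 i1 i2 i3 i2 i2 = 2 := by
    simp [rk3, h12, h13, h23, Ne.symm h12, Ne.symm h13, Ne.symm h23]
  have e32 : rk3 i1 i2 i3 i3 i2 = 1 := by
    simp [rk3, h12, h13, h23, Ne.symm h12, Ne.symm h13, Ne.symm h23]
  have e33 : rk3 i1 i2 i3 i3 i3 = 2 := by
    simp [rk3, h12, h13, h23, Ne.symm h12, Ne.symm h13, Ne.symm h23]
  set P : Prefs Agent man := mkPrefs man (fun x y => rk3 i1 i2 i3 (comm x) (comm y)) with hPdef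
  refine ⟨P, ?_⟩
  intro σ hσ
  by_contra hcon
  push_neg at hcon
  -- preference helpers
  have prefSC : ∀ x y z : Agent, man y ≠ man x →
      rk3 i1 i2 i3 (comm x) (comm y) < rk3 i1 i2 i3 (comm x) (comm z) → P.pref x y z :=
    fun x y z h1 h2 => mkPrefs_pref_of_sc (sc := fun x y => rk3 i1 i2 i3 (comm x) (comm y)) h1 h2
  have scLE : ∀ x y z : Agent, P.pref x y z → man z ≠ man x →
      rk3 i1 i2 i3 (comm x) (comm y) ≤ rk3 i1 i2 i3 (comm x) (comm z) :=
    fun x y z h h2 => mkPrefs_sc_le (sc := fun x y => rk3 i1 i2 i3 (comm x) (comm y)) h h2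
  have prefMan : ∀ {x y z : Agent}, P.pref x y z → man y ≠ man x := fun h => mkPrefs_man (sc := fun x y => rk3 i1 i2 i3 (comm x) (comm y)) h
  -- matching accessors
  have memP : ∀ (Q : Set ι) (x : Agent), comm x ∈ Q → comm (σ x Q) ∈ Q :=
    fun Q x hx => (hσ Q).1.mem x hx
  have invP : ∀ (Q : Set ι) (x : Agent), comm x ∈ Q → σ (σ x Q) Q = x :=
    fun Q x hx => (hσ Q).1.invol x hx
  have oppP : ∀ (Q : Set ι) (x : Agent), comm x ∈ Q → σ x Q ≠ x → man (σ x Q) ≠ man x :=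
    fun Q x hx => (hσ Q).1.opp x hx
  -- integration monotonicity
  have IM : ∀ (Q Q'' : Set ι), Q ⊆ Q'' → ∀ x : Agent, comm x ∈ Q →
      σ x Q'' = σ x Q ∨ P.pref x (σ x Q'') (σ x Q) := by
    intro Q Q'' hsub x hx
    have hd : Disjoint Q (Q'' \ Q) := disjoint_sdiff_self_right
    have hu : Q ∪ Q'' \ Q = Q'' := Set.union_diff_cancel hsub
    have hnp := hcon Q (Q'' \ Q) x hd hx
    rw [hu] at hnp
    by_cases he : σ x Q'' = σ x Q
    · exact Or.inl he
    have hx'' : comm x ∈ Q'' := hsub hx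
    by_cases h0 : σ x Q = x
    · have hne : σ x Q'' ≠ x := by rw [h0] at he; exact he
      refine Or.inr ?_
      rw [h0]
      exact P.worst x (σ x Q'') (oppP Q'' x hx'' hne)
    · have hop : man (σ x Q) ≠ man x := oppP Q x hx h0
      by_cases h2 : σ x Q'' = x
      · exact absurd (by rw [h2]; exact P.worst x (σ x Q) hop) hnp
      · have hop'' := oppP Q'' x hx'' h2
        rcases P.total x (σ x Q'') (σ x Q) hop'' hop he with h | h
        · exact Or.inr h
        · exact absurd h hnp
  have Mper : ∀ (Q Q'' : Set ι), Q ⊆ Q'' → ∀ x : Agent, comm x ∈ Q →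
      σ x Q ≠ x → σ x Q'' ≠ x := by
    intro Q Q'' hsub x hx h0 h''
    rcases IM Q Q'' hsub x hx with h | h
    · exact h0 (h ▸ h'')
    · rw [h''] at h
      exact (prefMan h) rfl
  -- subset relations between populations
  have hsub1 : ({i1} : Set ι) ⊆ {i1, i2} := by
    intro z hz
    rw [Set.mem_singleton_iff] at hz
    subst hz
    exact Set.mem_insert _ _
  have hsub2 : ({i2} : Set ι) ⊆ {i1, i2} := Set.subset_insert _ _
  have hsub2' : ({i2} : Set ι) ⊆ {i2, i3} := by
    intro z hz
    rw [Set.mem_singleton_iff] at hz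
    subst hz
    exact Set.mem_insert _ _
  have hsub3 : ({i3} : Set ι) ⊆ {i2, i3} := Set.subset_insert _ _
  have hsub12R : ({i1, i2} : Set ι) ⊆ {i1, i2, i3} :=
    Set.insert_subset_insert (Set.singleton_subset_iff.mpr (Set.mem_insert _ _))
  have hsub23R : ({i2, i3} : Set ι) ⊆ {i1, i2, i3} := Set.subset_insert _ _
  -- no community-1 man is matched inside community 1 in population {1,2}
  have ni12 : ∀ m, comm m = i1 → man m = true →
      σ m ({i1, i2} : Set ι) ≠ m → comm (σ m ({i1, i2} : Set ι)) ≠ i1 := by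
    refine no_intra_host P h12 (hσ ({i2} : Set ι)) (hσ ({i1, i2} : Set ι)) ?_ hn1 ?_ ?_ ?_ ?_
    · exact fun x hx hm => Mper {i2} {i1, i2} hsub2 x (by simp [hx]) hm
    · intro m w w' hcm hcw hcw' hm hw hw'
      refine prefSC m w' w (by simp [hw', hm]) ?_
      rw [hcm, hcw, hcw', e12, e11]
      norm_num
    · intro m' w w' hcm' hcw hcw' hm' hw hw'
      refine prefSC m' w w' (by simp [hw, hm']) ?_
      rw [hcm', hcw, hcw', e21, e22]
      norm_num
    · intro w m m' hcw hcm hcm' hw hm hm'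
      refine prefSC w m' m (by simp [hm', hw]) ?_
      rw [hcw, hcm, hcm', e12, e11]
      norm_num
    · intro w' m m' hcw' hcm hcm' hw' hm hm'
      refine prefSC w' m m' (by simp [hm, hw']) ?_
      rw [hcw', hcm, hcm', e21, e22]
      norm_num
  -- no community-2 man is matched inside community 2 in population {2,3}
  have ni23 : ∀ m, comm m = i2 → man m = true →
      σ m ({i2, i3} : Set ι) ≠ m → comm (σ m ({i2, i3} : Set ι)) ≠ i2 := by
    refine no_intra_host P h23 (hσ ({i3} : Set ι)) (hσ ({i2, i3} : Set ι)) ?_ hn2 ?_ ?_ ?_ ?_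
    · exact fun x hx hm => Mper {i3} {i2, i3} hsub3 x (by simp [hx]) hm
    · intro m w w' hcm hcw hcw' hm hw hw'
      refine prefSC m w' w (by simp [hw', hm]) ?_
      rw [hcm, hcw, hcw', e23, e22]
      norm_num
    · intro m' w w' hcm' hcw hcw' hm' hw hw'
      refine prefSC m' w w' (by simp [hw, hm']) ?_
      rw [hcm', hcw, hcw', e32, e33]
      norm_num
    · intro w m m' hcw hcm hcm' hw hm hm'
      refine prefSC w m' m (by simp [hm', hw]) ?_
      rw [hcw, hcm, hcm', e23, e22]
      norm_num
    · intro w' m m' hcw' hcm hcm' hw' hm hm'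
      refine prefSC w' m m' (by simp [hm, hw']) ?_
      rw [hcw', hcm, hcm', e32, e33]
      norm_num
  -- a matched couple in community 1
  have hnsz1 : 1 ≤ nsz man comm i1 := by
    obtain ⟨xm, hxm1, hxm2⟩ := hasMan i1
    obtain ⟨xw, hxw1, hxw2⟩ := hasWoman i1
    refine le_min ?_ ?_
    · rw [Nat.succ_le, Finset.card_pos]
      exact ⟨xm, mem_msetF.mpr ⟨hxm1, hxm2⟩⟩
    · rw [Nat.succ_le, Finset.card_pos]
      exact ⟨xw, mem_wsetF.mpr ⟨hxw1, hxw2⟩⟩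
  obtain ⟨a1, ha1⟩ : ∃ a1, a1 ∈ mmatchF man comm (fun x => σ x ({i1} : Set ι)) i1 := by
    apply Finset.card_pos.mp
    rw [(matched_cards P (hσ ({i1} : Set ι))).1]
    omega
  rw [mem_mmatchF] at ha1
  obtain ⟨⟨hca1, hma1⟩, hmat1⟩ := ha1
  have hb1c : comm (σ a1 ({i1} : Set ι)) = i1 := by
    have := memP {i1} a1 (by simp [hca1])
    simpa using this
  have hb1man : man (σ a1 ({i1} : Set ι)) = false := by
    have := oppP {i1} a1 (by simp [hca1]) hmat1
    rw [hma1] at this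
    simpa using this
  have hb1inv : σ (σ a1 ({i1} : Set ι)) ({i1} : Set ι) = a1 := invP {i1} a1 (by simp [hca1])
  have hb1mat : σ (σ a1 ({i1} : Set ι)) ({i1} : Set ι) ≠ σ a1 ({i1} : Set ι) := by
    rw [hb1inv]
    intro e
    rw [e, hb1man] at hma1
    exact Bool.noConfusion hma1
  -- two cases according to which gender is the short side of community 2
  by_cases hc2 : (wsetF man comm i2).card ≤ (msetF man comm i2).card
  · -- women are short in community 2: follow a1
    have hw12mat : σ a1 ({i1, i2} : Set ι) ≠ a1 :=
      Mper {i1} {i1, i2} hsub1 a1 (by simp [hca1]) hmat1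
    have hw12c : comm (σ a1 ({i1, i2} : Set ι)) = i2 := by
      have hmem := memP {i1, i2} a1 (by simp [hca1])
      have hne1 := ni12 a1 hca1 hma1 hw12mat
      simp only [Set.mem_insert_iff, Set.mem_singleton_iff] at hmem
      tauto
    have hw12man : man (σ a1 ({i1, i2} : Set ι)) = false := by
      have := oppP {i1, i2} a1 (by simp [hca1]) hw12mat
      rw [hma1] at this
      simpa using this
    -- the grand-population partner of a1 is a woman of community 2
    have hwsc : comm (σ a1 ({i1, i2, i3} : Set ι)) = i2 ∧
        man (σ a1 ({i1, i2, i3} : Set ι)) = false := by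
      rcases IM {i1, i2} {i1, i2, i3} hsub12R a1 (by simp [hca1]) with he | hp
      · rw [he]
        exact ⟨hw12c, hw12man⟩
      · constructor
        · have hle := scLE a1 _ _ hp (by rw [hw12man, hma1]; exact Bool.noConfusion)
          rw [hca1, hw12c, e12] at hle
          have hpop := memP {i1, i2, i3} a1 (by simp [hca1])
          simp only [Set.mem_insert_iff, Set.mem_singleton_iff] at hpop
          rcases hpop with h | h | h
          · rw [h, e11] at hle; omega
          · exact h
          · rw [h, e13] at hle; omega
        · have := prefMan hp
          rw [hma1] at this
          simpa using this
    have hwsinv : σ (σ a1 ({i1, i2, i3} : Set ι)) ({i1, i2, i3} : Set ι) = a1 :=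
      invP {i1, i2, i3} a1 (by simp [hca1])
    -- community-2 women are all matched in population {2}
    have hws2mat : σ (σ a1 ({i1, i2, i3} : Set ι)) ({i2} : Set ι) ≠
        σ a1 ({i1, i2, i3} : Set ι) := by
      have hmemw : σ a1 ({i1, i2, i3} : Set ι) ∈
          wmatchF man comm (fun x => σ x ({i2} : Set ι)) i2 := by
        rw [(matched_cards P (hσ ({i2} : Set ι))).2.2.2 hc2]
        exact mem_wsetF.mpr ⟨hwsc.1, hwsc.2⟩
      exact (mem_wmatchF.mp hmemw).2
    -- so she is matched in population {2,3}, necessarily to a community-3 man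
    have hqmat : σ (σ a1 ({i1, i2, i3} : Set ι)) ({i2, i3} : Set ι) ≠
        σ a1 ({i1, i2, i3} : Set ι) :=
      Mper {i2} {i2, i3} hsub2' (σ a1 ({i1, i2, i3} : Set ι)) (by simp [hwsc.1]) hws2mat
    have hqman : man (σ (σ a1 ({i1, i2, i3} : Set ι)) ({i2, i3} : Set ι)) = true := by
      have := oppP {i2, i3} (σ a1 ({i1, i2, i3} : Set ι)) (by simp [hwsc.1]) hqmat
      rw [hwsc.2] at this
      simpa using this
    have hqinv : σ (σ (σ a1 ({i1, i2, i3} : Set ι)) ({i2, i3} : Set ι)) ({i2, i3} : Set ι) =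
        σ a1 ({i1, i2, i3} : Set ι) := invP {i2, i3} (σ a1 ({i1, i2, i3} : Set ι)) (by simp [hwsc.1])
    have hqc : comm (σ (σ a1 ({i1, i2, i3} : Set ι)) ({i2, i3} : Set ι)) = i3 := by
      have hmem := memP {i2, i3} (σ a1 ({i1, i2, i3} : Set ι)) (by simp [hwsc.1])
      simp only [Set.mem_insert_iff, Set.mem_singleton_iff] at hmem
      rcases hmem with h | h
      · exfalso
        have hmatq : σ (σ (σ a1 ({i1, i2, i3} : Set ι)) ({i2, i3} : Set ι)) ({i2, i3} : Set ι) ≠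
            σ (σ a1 ({i1, i2, i3} : Set ι)) ({i2, i3} : Set ι) := by
          rw [hqinv]
          intro e
          rw [e, hqman] at hwsc
          exact Bool.noConfusion hwsc.2
        have := ni23 _ h hqman hmatq
        rw [hqinv] at this
        exact this hwsc.1
      · exact h
    -- contradiction with integration monotonicity for her
    rcases IM {i2, i3} {i1, i2, i3} hsub23R (σ a1 ({i1, i2, i3} : Set ι))
      (by simp [hwsc.1]) with he | hp
    · rw [hwsinv] at he
      apply h13
      rw [← hca1, he, hqc]
    · rw [hwsinv] at hp
      have hle := scLE _ _ _ hp (by rw [hqman, hwsc.2]; exact Bool.noConfusion)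
      rw [hwsc.1, hca1, hqc, e21, e23] at hle
      omega
  · -- men are short in community 2: follow b1, the partner of a1
    have hms2 : (msetF man comm i2).card ≤ (wsetF man comm i2).card :=
      le_of_not_ge hc2
    have hm12mat : σ (σ a1 ({i1} : Set ι)) ({i1, i2} : Set ι) ≠ σ a1 ({i1} : Set ι) :=
      Mper {i1} {i1, i2} hsub1 (σ a1 ({i1} : Set ι)) (by simp [hb1c]) hb1mat
    have hm12man : man (σ (σ a1 ({i1} : Set ι)) ({i1, i2} : Set ι)) = true := by
      have := oppP {i1, i2} (σ a1 ({i1} : Set ι)) (by simp [hb1c]) hm12mat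
      rw [hb1man] at this
      simpa using this
    have hm12inv : σ (σ (σ a1 ({i1} : Set ι)) ({i1, i2} : Set ι)) ({i1, i2} : Set ι) =
        σ a1 ({i1} : Set ι) := invP {i1, i2} (σ a1 ({i1} : Set ι)) (by simp [hb1c])
    have hm12c : comm (σ (σ a1 ({i1} : Set ι)) ({i1, i2} : Set ι)) = i2 := by
      have hmem := memP {i1, i2} (σ a1 ({i1} : Set ι)) (by simp [hb1c])
      simp only [Set.mem_insert_iff, Set.mem_singleton_iff] at hmem
      rcases hmem with h | h
      · exfalso
        have hmatm : σ (σ (σ a1 ({i1} : Set ι)) ({i1, i2} : Set ι)) ({i1, i2} : Set ι) ≠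
            σ (σ a1 ({i1} : Set ι)) ({i1, i2} : Set ι) := by
          rw [hm12inv]
          intro e
          rw [e, hm12man] at hb1man
          exact Bool.noConfusion hb1man
        have := ni12 _ h hm12man hmatm
        rw [hm12inv] at this
        exact this hb1c
      · exact h
    -- the grand-population partner of b1 is a man of community 2
    have hmsc : comm (σ (σ a1 ({i1} : Set ι)) ({i1, i2, i3} : Set ι)) = i2 ∧
        man (σ (σ a1 ({i1} : Set ι)) ({i1, i2, i3} : Set ι)) = true := by
      rcases IM {i1, i2} {i1, i2, i3} hsub12R (σ a1 ({i1} : Set ι))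
        (by simp [hb1c]) with he | hp
      · rw [he]
        exact ⟨hm12c, hm12man⟩
      · constructor
        · have hle := scLE _ _ _ hp (by rw [hm12man, hb1man]; exact fun e => Bool.noConfusion e.symm)
          rw [hb1c, hm12c, e12] at hle
          have hpop := memP {i1, i2, i3} (σ a1 ({i1} : Set ι)) (by simp [hb1c])
          simp only [Set.mem_insert_iff, Set.mem_singleton_iff] at hpop
          rcases hpop with h | h | h
          · rw [h, e11] at hle; omega
          · exact h
          · rw [h, e13] at hle; omega
        · have := prefMan hp
          rw [hb1man] at this
          simpa using this
    have hmsinv : σ (σ (σ a1 ({i1} : Set ι)) ({i1, i2, i3} : Set ι)) ({i1, i2, i3} : Set ι) =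
        σ a1 ({i1} : Set ι) := invP {i1, i2, i3} (σ a1 ({i1} : Set ι)) (by simp [hb1c])
    -- community-2 men are all matched in population {2}
    have hms2mat : σ (σ (σ a1 ({i1} : Set ι)) ({i1, i2, i3} : Set ι)) ({i2} : Set ι) ≠
        σ (σ a1 ({i1} : Set ι)) ({i1, i2, i3} : Set ι) := by
      have hmemm : σ (σ a1 ({i1} : Set ι)) ({i1, i2, i3} : Set ι) ∈
          mmatchF man comm (fun x => σ x ({i2} : Set ι)) i2 := by
        rw [(matched_cards P (hσ ({i2} : Set ι))).2.2.1 hms2]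
        exact mem_msetF.mpr ⟨hmsc.1, hmsc.2⟩
      exact (mem_mmatchF.mp hmemm).2
    have hqmat : σ (σ (σ a1 ({i1} : Set ι)) ({i1, i2, i3} : Set ι)) ({i2, i3} : Set ι) ≠
        σ (σ a1 ({i1} : Set ι)) ({i1, i2, i3} : Set ι) :=
      Mper {i2} {i2, i3} hsub2' (σ (σ a1 ({i1} : Set ι)) ({i1, i2, i3} : Set ι))
        (by simp [hmsc.1]) hms2mat
    have hqman : man (σ (σ (σ a1 ({i1} : Set ι)) ({i1, i2, i3} : Set ι))
        ({i2, i3} : Set ι)) = false := by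
      have := oppP {i2, i3} (σ (σ a1 ({i1} : Set ι)) ({i1, i2, i3} : Set ι))
        (by simp [hmsc.1]) hqmat
      rw [hmsc.2] at this
      simpa using this
    have hqc : comm (σ (σ (σ a1 ({i1} : Set ι)) ({i1, i2, i3} : Set ι)) ({i2, i3} : Set ι)) = i3 := by
      have hmem := memP {i2, i3} (σ (σ a1 ({i1} : Set ι)) ({i1, i2, i3} : Set ι))
        (by simp [hmsc.1])
      simp only [Set.mem_insert_iff, Set.mem_singleton_iff] at hmem
      rcases hmem with h | h
      · exact absurd h (ni23 _ hmsc.1 hmsc.2 hqmat)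
      · exact h
    rcases IM {i2, i3} {i1, i2, i3} hsub23R (σ (σ a1 ({i1} : Set ι)) ({i1, i2, i3} : Set ι))
      (by simp [hmsc.1]) with he | hp
    · rw [hmsinv] at he
      apply h13
      rw [← hb1c, he, hqc]
    · rw [hmsinv] at hp
      have hle := scLE _ _ _ hp (by rw [hqman, hmsc.2]; exact fun e => Bool.noConfusion e.symm)
      rw [hmsc.1, hb1c, hqc, e21, e23] at hle
      omega
end

section
/- Consider a society with three communities A, B, D, each consisting of one man and one woman, with the cyclic preference profile: m^A ranks w^B ≻ w^D ≻ w^A; m^B ranks w^D ≻ w^A ≻ w^B; m^D ranks w^A ≻ w^B ≻ w^D; w^A ranks m^B ≻ m^D ≻ m^A; w^B ranks m^D ≻ m^A ≻ m^B; w^D ranks m^A ≻ m^B ≻ m^D. Then (i) every Pareto optimal matching scheme σ satisfies σ(w^A, {A,B}) = m^B, σ(w^B, {B,D}) = m^D, and σ(w^D, {D,A}) = m^A; and (ii) there is no matching μ of all six agents such that simultaneously μ(m^A) ⪰_{m^A} w^B, μ(w^A) ⪰_{w^A} m^B, μ(m^B) ⪰_{m^B} w^D, μ(w^B) ⪰_{w^B}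 m^D, μ(m^D) ⪰_{m^D} w^A, and μ(w^D) ⪰_{w^D} m^A. Consequently, no Pareto optimal matching scheme for this profile is integration monotonic. -/
/-- Genders in the six-agent example: agent 0 is `m^A`, 1 is `w^A`, 2 is `m^B`,
3 is `w^B`, 4 is `m^D`, 5 is `w^D` (even-numbered agents are men). -/
def man6 : Fin 6 → Bool := fun x => decide (x.val % 2 = 0)

/-- Communities in the six-agent example: agents 0,1 form community `A` (0),
agents 2,3 form community `B` (1), agents 4,5 form community `D` (2). -/
def comm6 : Fin 6 → Fin 3 := fun x => ⟨x.val / 2, by have := x.isLt; omega⟩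

lemma Prefs.asym {Agent : Type} {man : Agent → Bool} (P : Prefs Agent man)
    {x a b : Agent} (h : P.pref x a b) : ¬ P.pref x b a :=
  fun h' => P.irrefl x a (P.trans x a b a h h')

/-- If the "cross" matching gives everyone in a four-agent population their
unique top feasible partner, then any Pareto optimal matching equals it. -/
lemma cross_lemma (P : Prefs (Fin 6) man6) (p q r s : Fin 6)
    (hpq : p ≠ q) (hpr : p ≠ r) (hps : p ≠ s) (hqr : q ≠ r) (hqs : q ≠ s) (hrs : r ≠ s)
    (hp : man6 p = true) (hq : man6 q = false) (hr : man6 r = true) (hs : man6 s = false)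
    (h1 : P.pref p s q) (h2 : P.pref q r p) (h3 : P.pref r q s) (h4 : P.pref s p r)
    (μ : Fin 6 → Fin 6) (hμ : IsPareto P {p, q, r, s} μ) :
    μ p = s ∧ μ q = r ∧ μ r = q ∧ μ s = p := by
  obtain ⟨hm, hpar⟩ := hμ
  set A : Set (Fin 6) := {p, q, r, s} with hA
  have memA : ∀ x, x ∈ A ↔ x = p ∨ x = q ∨ x = r ∨ x = s := by
    intro x; simp [hA, Set.mem_insert_iff]
  have hpA : p ∈ A := (memA p).mpr (Or.inl rfl)
  have hqA : q ∈ A := (memA q).mpr (Or.inr (Or.inl rfl))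
  have hrA : r ∈ A := (memA r).mpr (Or.inr (Or.inr (Or.inl rfl)))
  have hsA : s ∈ A := (memA s).mpr (Or.inr (Or.inr (Or.inr rfl)))
  -- exclude same-gender partners
  have hnot : ∀ x ∈ A, ∀ y, man6 y = man6 x → y ≠ x → μ x ≠ y := by
    intro x hx y hgy hyx hxy
    exact hm.opp x hx (by rw [hxy]; exact hyx) (by rw [hxy, hgy])
  have hμp : μ p = p ∨ μ p = q ∨ μ p = s := by
    rcases (memA (μ p)).mp (hm.mem p hpA) with h | h | h | h
    · exact Or.inl h
    · exact Or.inr (Or.inl h)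
    · exact absurd h (hnot p hpA r (by rw [hr, hp]) (Ne.symm hpr))
    · exact Or.inr (Or.inr h)
  have hμq : μ q = p ∨ μ q = q ∨ μ q = r := by
    rcases (memA (μ q)).mp (hm.mem q hqA) with h | h | h | h
    · exact Or.inl h
    · exact Or.inr (Or.inl h)
    · exact Or.inr (Or.inr h)
    · exact absurd h (hnot q hqA s (by rw [hs, hq]) (Ne.symm hqs))
  have hμr : μ r = q ∨ μ r = r ∨ μ r = s := by
    rcases (memA (μ r)).mp (hm.mem r hrA) with h | h | h | h
    · exact absurd h (hnot r hrA p (by rw [hp, hr]) hpr)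
    · exact Or.inl h
    · exact Or.inr (Or.inl h)
    · exact Or.inr (Or.inr h)
  have hμs : μ s = p ∨ μ s = r ∨ μ s = s := by
    rcases (memA (μ s)).mp (hm.mem s hsA) with h | h | h | h
    · exact Or.inl h
    · exact absurd h (hnot s hsA q (by rw [hq, hs]) hqs)
    · exact Or.inr (Or.inl h)
    · exact Or.inr (Or.inr h)
  -- the cross matching
  set ν : Fin 6 → Fin 6 :=
    fun x => if x = p then s else if x = q then r else if x = r then q else
      if x = s then p else x with hν
  have hνp : ν p = s := by simp [hν]
  have hνq : ν q = r := by simp [hν, Ne.symm hpq]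
  have hνr : ν r = q := by simp [hν, Ne.symm hpr, Ne.symm hqr]
  have hνs : ν s = p := by simp [hν, Ne.symm hps, Ne.symm hqs, Ne.symm hrs]
  have hMν : IsMatching man6 A ν := by
    constructor
    · intro x hx
      rcases (memA x).mp hx with h | h | h | h <;> subst h <;>
        simp only [hνp, hνq, hνr, hνs] <;> assumption
    · intro x hx
      rcases (memA x).mp hx with h | h | h | h <;> subst h <;>
        simp [hνp, hνq, hνr, hνs]
    · intro x hx _
      rcases (memA x).mp hx with h | h | h | h <;> subst h <;>
        simp only [hνp, hνq, hνr, hνs] <;> simp [hp, hq, hr, hs]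
    · intro x hx
      have h := (memA x).not.mp hx
      push_neg at h
      obtain ⟨h1', h2', h3', h4'⟩ := h
      simp [hν, h1', h2', h3', h4']
  have hwp : P.pref p s p := P.worst p s (by rw [hs, hp]; simp)
  have hwq : P.pref q r q := P.worst q r (by rw [hr, hq]; simp)
  have hwr : P.pref r q r := P.worst r q (by rw [hq, hr]; simp)
  have hws : P.pref s p s := P.worst s p (by rw [hp, hs]; simp)
  have hweak : ∀ x ∈ A, P.weakPref x (ν x) (μ x) := by
    intro x hx
    rcases (memA x).mp hx with h | h | h | h <;> subst h
    · rw [hνp]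
      rcases hμp with h | h | h <;> rw [h]
      exacts [Or.inr hwp, Or.inr h1, Or.inl rfl]
    · rw [hνq]
      rcases hμq with h | h | h <;> rw [h]
      exacts [Or.inr h2, Or.inr hwq, Or.inl rfl]
    · rw [hνr]
      rcases hμr with h | h | h <;> rw [h]
      exacts [Or.inl rfl, Or.inr hwr, Or.inr h3]
    · rw [hνs]
      rcases hμs with h | h | h <;> rw [h]
      exacts [Or.inl rfl, Or.inr h4, Or.inr hws]
  have hps' : μ p = s := by
    by_contra hne
    refine hpar ⟨ν, hMν, hweak, p, hpA, ?_⟩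
    rw [hνp]
    rcases hμp with h | h | h <;> rw [h]
    exacts [hwp, h1, absurd h hne]
  have hsp' : μ s = p := by rw [← hps', hm.invol p hpA]
  have hqr' : μ q = r := by
    by_contra hne
    have hqp : μ q ≠ p := fun h => by
      have := hm.invol q hqA
      rw [h, hps'] at this
      exact hqs this.symm
    have hqq : μ q = q := by tauto
    refine hpar ⟨ν, hMν, hweak, q, hqA, ?_⟩
    rw [hνq, hqq]; exact hwq
  have hrq' : μ r = q := by rw [← hqr', hm.invol q hqA]
  exact ⟨hps', hqr', hrq', hsp'⟩

lemma setEq1 : {x : Fin 6 | comm6 x ∈ ({0, 1} : Set (Fin 3))}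
    = ({0, 1, 2, 3} : Set (Fin 6)) := by
  ext x
  simp only [Set.mem_setOf_eq, Set.mem_insert_iff, Set.mem_singleton_iff]
  fin_cases x <;> decide

lemma setEq2 : {x : Fin 6 | comm6 x ∈ ({1, 2} : Set (Fin 3))}
    = ({2, 3, 4, 5} : Set (Fin 6)) := by
  ext x
  simp only [Set.mem_setOf_eq, Set.mem_insert_iff, Set.mem_singleton_iff]
  fin_cases x <;> decide

lemma setEq3 : {x : Fin 6 | comm6 x ∈ ({2, 0} : Set (Fin 3))}
    = ({4, 5, 0, 1} : Set (Fin 6)) := by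
  ext x
  simp only [Set.mem_setOf_eq, Set.mem_insert_iff, Set.mem_singleton_iff]
  fin_cases x <;> decide

lemma setEqU : {x : Fin 6 | comm6 x ∈ (Set.univ : Set (Fin 3))} = Set.univ := by
  ext x; simp

lemma disj1 : Disjoint ({0, 1} : Set (Fin 3)) {2} := by
  rw [Set.disjoint_singleton_right, Set.mem_insert_iff, Set.mem_singleton_iff]
  push_neg
  exact ⟨by decide, by decide⟩

lemma disj2 : Disjoint ({1, 2} : Set (Fin 3)) {0} := by
  rw [Set.disjoint_singleton_right, Set.mem_insert_iff, Set.mem_singleton_iff]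
  push_neg
  exact ⟨by decide, by decide⟩

lemma disj3 : Disjoint ({2, 0} : Set (Fin 3)) {1} := by
  rw [Set.disjoint_singleton_right, Set.mem_insert_iff, Set.mem_singleton_iff]
  push_neg
  exact ⟨by decide, by decide⟩

lemma union1 : ({0, 1} : Set (Fin 3)) ∪ {2} = Set.univ := by
  ext a
  simp only [Set.mem_union, Set.mem_insert_iff, Set.mem_singleton_iff, Set.mem_univ,
    iff_true]
  fin_cases a <;> decide

lemma union2 : ({1, 2} : Set (Fin 3)) ∪ {0} = Set.univ := by
  ext a
  simp only [Set.mem_union, Set.mem_insert_iff, Set.mem_singleton_iff, Set.mem_univ,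
    iff_true]
  fin_cases a <;> decide

lemma union3 : ({2, 0} : Set (Fin 3)) ∪ {1} = Set.univ := by
  ext a
  simp only [Set.mem_union, Set.mem_insert_iff, Set.mem_singleton_iff, Set.mem_univ,
    iff_true]
  fin_cases a <;> decide

lemma part_ii (P : Prefs (Fin 6) man6)
    (hmA1 : P.pref 0 3 5) (hmA2 : P.pref 0 5 1)
    (hwB1 : P.pref 3 4 0) :
    ¬ ∃ μ : Fin 6 → Fin 6, IsMatching man6 Set.univ μ ∧
      P.weakPref 0 (μ 0) 3 ∧ P.weakPref 1 (μ 1) 2 ∧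
      P.weakPref 2 (μ 2) 5 ∧ P.weakPref 3 (μ 3) 4 ∧
      P.weakPref 4 (μ 4) 1 ∧ P.weakPref 5 (μ 5) 0 := by
  rintro ⟨μ, hm, h0, h1, h2, h3, h4, h5⟩
  have hall : ∀ y : Fin 6, y = 0 ∨ y = 1 ∨ y = 2 ∨ y = 3 ∨ y = 4 ∨ y = 5 := by
    decide
  have hμ0 : μ 0 = 3 := by
    rcases h0 with h | h
    · exact h
    · rcases hall (μ 0) with hy | hy | hy | hy | hy | hy <;> rw [hy] at h
      · exact absurd h (P.asym (P.worst 0 3 (by decide)))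
      · exact absurd h (P.asym (P.trans 0 3 5 1 hmA1 hmA2))
      · exact absurd (hm.opp 0 trivial (by rw [hy]; decide)) (by rw [hy]; decide)
      · exact hy
      · exact absurd (hm.opp 0 trivial (by rw [hy]; decide)) (by rw [hy]; decide)
      · exact absurd h (P.asym hmA1)
  have hμ3 : μ 3 = 0 := by
    have := hm.invol 0 trivial
    rwa [hμ0] at this
  rw [hμ3] at h3
  rcases h3 with h | h
  · exact absurd h (by decide)
  · exact absurd h (P.asym hwB1)

lemma key1 (P : Prefs (Fin 6) man6)
    (hmA1 : P.pref 0 3 5) (hmA2 : P.pref 0 5 1)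
    (hmB2 : P.pref 2 1 3)
    (hwA1 : P.pref 1 2 4) (hwA2 : P.pref 1 4 0)
    (hwB2 : P.pref 3 0 2)
    (σ : Fin 6 → Set (Fin 3) → Fin 6)
    (hσ : ∀ Q : Set (Fin 3), IsPareto P {x | comm6 x ∈ Q} (fun x => σ x Q)) :
    σ 0 {0, 1} = 3 ∧ σ 1 {0, 1} = 2 ∧ σ 2 {0, 1} = 1 ∧ σ 3 {0, 1} = 0 := by
  have h := hσ {0, 1}
  rw [setEq1] at h
  exact cross_lemma P 0 1 2 3 (by decide) (by decide) (by decide) (by decide)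
    (by decide) (by decide) rfl rfl rfl rfl
    (P.trans 0 3 5 1 hmA1 hmA2) (P.trans 1 2 4 0 hwA1 hwA2) hmB2 hwB2 _ h

lemma key2 (P : Prefs (Fin 6) man6)
    (hmB1 : P.pref 2 5 1) (hmB2 : P.pref 2 1 3)
    (hmD2 : P.pref 4 3 5)
    (hwB1 : P.pref 3 4 0) (hwB2 : P.pref 3 0 2)
    (hwD2 : P.pref 5 2 4)
    (σ : Fin 6 → Set (Fin 3) → Fin 6)
    (hσ : ∀ Q : Set (Fin 3), IsPareto P {x | comm6 x ∈ Q} (fun x => σ x Q)) :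
    σ 2 {1, 2} = 5 ∧ σ 3 {1, 2} = 4 ∧ σ 4 {1, 2} = 3 ∧ σ 5 {1, 2} = 2 := by
  have h := hσ {1, 2}
  rw [setEq2] at h
  exact cross_lemma P 2 3 4 5 (by decide) (by decide) (by decide) (by decide)
    (by decide) (by decide) rfl rfl rfl rfl
    (P.trans 2 5 1 3 hmB1 hmB2) (P.trans 3 4 0 2 hwB1 hwB2) hmD2 hwD2 _ h

lemma key3 (P : Prefs (Fin 6) man6)
    (hmD1 : P.pref 4 1 3) (hmD2 : P.pref 4 3 5)
    (hmA2 : P.pref 0 5 1)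
    (hwD1 : P.pref 5 0 2) (hwD2 : P.pref 5 2 4)
    (hwA2 : P.pref 1 4 0)
    (σ : Fin 6 → Set (Fin 3) → Fin 6)
    (hσ : ∀ Q : Set (Fin 3), IsPareto P {x | comm6 x ∈ Q} (fun x => σ x Q)) :
    σ 4 {2, 0} = 1 ∧ σ 5 {2, 0} = 0 ∧ σ 0 {2, 0} = 5 ∧ σ 1 {2, 0} = 4 := by
  have h := hσ {2, 0}
  rw [setEq3] at h
  exact cross_lemma P 4 5 0 1 (by decide) (by decide) (by decide) (by decide)
    (by decide) (by decide) rfl rfl rfl rfl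
    (P.trans 4 1 3 5 hmD1 hmD2) (P.trans 5 0 2 4 hwD1 hwD2) hmA2 hwA2 _ h

/-- **The example of Proposition 2.** With three communities `A, B, D`, each of
one man and one woman, and the cyclic preferences
`m^A : w^B ≻ w^D ≻ w^A`, `m^B : w^D ≻ w^A ≻ w^B`, `m^D : w^A ≻ w^B ≻ w^D`,
`w^A : m^B ≻ m^D ≻ m^A`, `w^B : m^D ≻ m^A ≻ m^B`, `w^D : m^A ≻ m^B ≻ m^D`:
(i) every Pareto optimal matching scheme `σ` satisfies `σ(w^A,{A,B}) = m^B`,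
`σ(w^B,{B,D}) = m^D`, `σ(w^D,{D,A}) = m^A`; (ii) no matching of all six agents
gives every agent a partner weakly preferred to the one listed above
(`w^B` for `m^A`, `m^B` for `w^A`, `w^D` for `m^B`, `m^D` for `w^B`,
`w^A` for `m^D`, `m^A` for `w^D`); and consequently (iii) no Pareto optimal
matching scheme for this profile is integration monotonic. -/
theorem pareto_cyclic_example
    (P : Prefs (Fin 6) man6)
    (hmA1 : P.pref 0 3 5) (hmA2 : P.pref 0 5 1)  -- m^A : w^B ≻ w^D ≻ w^A
    (hmB1 : P.pref 2 5 1) (hmB2 : P.pref 2 1 3)  -- m^B : w^D ≻ w^A ≻ w^B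
    (hmD1 : P.pref 4 1 3) (hmD2 : P.pref 4 3 5)  -- m^D : w^A ≻ w^B ≻ w^D
    (hwA1 : P.pref 1 2 4) (hwA2 : P.pref 1 4 0)  -- w^A : m^B ≻ m^D ≻ m^A
    (hwB1 : P.pref 3 4 0) (hwB2 : P.pref 3 0 2)  -- w^B : m^D ≻ m^A ≻ m^B
    (hwD1 : P.pref 5 0 2) (hwD2 : P.pref 5 2 4)  -- w^D : m^A ≻ m^B ≻ m^D
    :
    (∀ σ : Fin 6 → Set (Fin 3) → Fin 6,
        (∀ Q : Set (Fin 3), IsPareto P {x | comm6 x ∈ Q} (fun x => σ x Q)) →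
        σ 1 {0, 1} = 2 ∧ σ 3 {1, 2} = 4 ∧ σ 5 {2, 0} = 0) ∧
    (¬ ∃ μ : Fin 6 → Fin 6, IsMatching man6 Set.univ μ ∧
        P.weakPref 0 (μ 0) 3 ∧ P.weakPref 1 (μ 1) 2 ∧
        P.weakPref 2 (μ 2) 5 ∧ P.weakPref 3 (μ 3) 4 ∧
        P.weakPref 4 (μ 4) 1 ∧ P.weakPref 5 (μ 5) 0) ∧
    (∀ σ : Fin 6 → Set (Fin 3) → Fin 6,
        (∀ Q : Set (Fin 3), IsPareto P {x | comm6 x ∈ Q} (fun x => σ x Q)) →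
        ¬ (∀ Q Q' : Set (Fin 3), Disjoint Q Q' → ∀ x : Fin 6, comm6 x ∈ Q →
            P.weakPref x (σ x (Q ∪ Q')) (σ x Q))) := by
  refine ⟨fun σ hσ =>
      ⟨(key1 P hmA1 hmA2 hmB2 hwA1 hwA2 hwB2 σ hσ).2.1,
       (key2 P hmB1 hmB2 hmD2 hwB1 hwB2 hwD2 σ hσ).2.1,
       (key3 P hmD1 hmD2 hmA2 hwD1 hwD2 hwA2 σ hσ).2.1⟩,
    part_ii P hmA1 hmA2 hwB1, ?_⟩
  intro σ hσ hIM
  obtain ⟨k10, k11, k12, k13⟩ := key1 P hmA1 hmA2 hmB2 hwA1 hwA2 hwB2 σ hσ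
  obtain ⟨k20, k21, k22, k23⟩ := key2 P hmB1 hmB2 hmD2 hwB1 hwB2 hwD2 σ hσ
  obtain ⟨k30, k31, k32, k33⟩ := key3 P hmD1 hmD2 hmA2 hwD1 hwD2 hwA2 σ hσ
  have w0 := hIM {0, 1} {2} disj1 0 (Or.inl rfl)
  have w1 := hIM {0, 1} {2} disj1 1 (Or.inl rfl)
  have w2 := hIM {1, 2} {0} disj2 2 (Or.inl rfl)
  have w3 := hIM {1, 2} {0} disj2 3 (Or.inl rfl)
  have w4 := hIM {2, 0} {1} disj3 4 (Or.inl rfl)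
  have w5 := hIM {2, 0} {1} disj3 5 (Or.inl rfl)
  rw [union1, k10] at w0
  rw [union1, k11] at w1
  rw [union2, k20] at w2
  rw [union2, k21] at w3
  rw [union3, k30] at w4
  rw [union3, k31] at w5
  have hMu : IsMatching man6 Set.univ (fun x => σ x Set.univ) := by
    have := (hσ Set.univ).1
    rwa [setEqU] at this
  exact part_ii P hmA1 hmA2 hwB1
    ⟨fun x => σ x Set.univ, hMu, w0, w1, w2, w3, w4, w5⟩
end

section
/- For every society (any finite collection of pairwise disjoint communities) and every strict preference profile, there exists a matching scheme σ that is both Pareto optimal (σ(·,P) is a Pareto optimal matching for every population P) and weakly integration monotonic (every agent x weakly prefers σ(x,S) to σ(x,C_x)). -/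
/-- Above any matching there is a Pareto optimal matching that every agent
weakly prefers. -/
theorem exists_pareto_above {Agent : Type} [Fintype Agent] {man : Agent → Bool}
    (P : Prefs Agent man) (A : Set Agent) (μ0 : Agent → Agent)
    (h0 : IsMatching man A μ0) :
    ∃ μ, IsPareto P A μ ∧ ∀ x ∈ A, P.weakPref x (μ x) (μ0 x) := by
  classical
  set r : Agent → Agent → ℕ :=
    fun x a => (Finset.univ.filter (fun b => P.pref x a b)).card with hrdef
  have hr : ∀ x a b, P.pref x a b → r x b < r x a := by
    intro x a b hab
    have hsub : (Finset.univ.filter (fun c => P.pref x b c)) ⊆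
        (Finset.univ.filter (fun c => P.pref x a c)) := by
      intro c hc
      simp only [Finset.mem_filter, Finset.mem_univ, true_and] at hc ⊢
      exact P.trans x a b c hab hc
    exact Finset.card_lt_card ((Finset.ssubset_iff_of_subset hsub).mpr
      ⟨b, by simp [hab], by simp [P.irrefl]⟩)
  have hrw : ∀ x a b, P.weakPref x a b → r x b ≤ r x a := by
    rintro x a b (rfl | hab)
    · exact le_rfl
    · exact (hr x a b hab).le
  set W : (Agent → Agent) → ℕ := fun μ => ∑ x, if x ∈ A then r x (μ x) else 0 with hWdef
  set T : Finset (Agent → Agent) := Finset.univ.filter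
    (fun μ => IsMatching man A μ ∧ ∀ x ∈ A, P.weakPref x (μ x) (μ0 x)) with hTdef
  have hT0 : μ0 ∈ T := by
    simp only [hTdef, Finset.mem_filter, Finset.mem_univ, true_and]
    exact ⟨h0, fun x _ => Or.inl rfl⟩
  obtain ⟨μ, hμT, hmax⟩ := T.exists_max_image W ⟨μ0, hT0⟩
  have hμT' := hμT
  simp only [hTdef, Finset.mem_filter, Finset.mem_univ, true_and] at hμT'
  obtain ⟨hμ, hdom⟩ := hμT'
  refine ⟨μ, ⟨hμ, ?_⟩, hdom⟩
  rintro ⟨μ', hμ', hweak, y, hy, hstr⟩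
  have hμ'T : μ' ∈ T := by
    simp only [hTdef, Finset.mem_filter, Finset.mem_univ, true_and]
    refine ⟨hμ', fun x hx => ?_⟩
    rcases hweak x hx with h | h1
    · rw [Prefs.weakPref, h]; exact hdom x hx
    · rcases hdom x hx with h2 | h2
      · exact Or.inr (h2 ▸ h1)
      · exact Or.inr (P.trans _ _ _ _ h1 h2)
  have hlt : W μ < W μ' := by
    apply Finset.sum_lt_sum
    · intro x _
      by_cases hx : x ∈ A
      · simpa [hx] using hrw x (μ' x) (μ x) (hweak x hx)
      · simp [hx]
    · exact ⟨y, Finset.mem_univ y, by simpa [hy] using hr y (μ' y) (μ y) hstr⟩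
  exact absurd (hmax μ' hμ'T) (not_le.mpr hlt)

/-- **Pareto optimal and WIM matching schemes always exist.** For every society
(any finite collection of pairwise disjoint communities, each with at least one
man and one woman) and every strict preference profile, there is a matching
scheme `σ` that is Pareto optimal for every population and weakly integration
monotonic: every agent weakly prefers the partner obtained in the full society
to the partner obtained in his or her own community. -/
theorem exists_pareto_and_WIM_scheme
    {Agent ι : Type} [Fintype Agent] [Fintype ι]
    (man : Agent → Bool) (comm : Agent → ι)
    (hasMan : ∀ i : ι, ∃ x, comm x = i ∧ man x = true)
    (hasWoman : ∀ i : ι, ∃ x, comm x = i ∧ man x = false)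
    (P : Prefs Agent man) :
    ∃ σ : Agent → Set ι → Agent,
      (∀ Q : Set ι, IsPareto P {x | comm x ∈ Q} (fun x => σ x Q)) ∧
      (∀ x : Agent, P.weakPref x (σ x Set.univ) (σ x {comm x})) := by
  classical
  have idm : ∀ Q : Set ι, IsMatching man {x | comm x ∈ Q} id :=
    fun Q => ⟨fun x hx => hx, fun x _ => rfl, fun x _ h => absurd rfl h, fun x _ => rfl⟩
  have base := fun Q : Set ι =>
    exists_pareto_above P {x | comm x ∈ Q} id (idm Q)
  choose ν hν hνd using base
  set μ0 : Agent → Agent := fun x => ν {comm x} x with hμ0def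
  have hmem : ∀ x : Agent, x ∈ {y | comm y ∈ ({comm x} : Set ι)} := by
    intro x; simp
  have hcomm : ∀ x, comm (μ0 x) = comm x := by
    intro x
    have := (hν {comm x}).1.mem x (hmem x)
    simpa using this
  have h0 : IsMatching man {x | comm x ∈ (Set.univ : Set ι)} μ0 := by
    refine ⟨fun x _ => trivial, ?_, ?_, fun x hx => absurd trivial hx⟩
    · intro x _
      show ν {comm (μ0 x)} (μ0 x) = x
      rw [hcomm x]
      exact (hν {comm x}).1.invol x (hmem x)
    · intro x _ h
      exact (hν {comm x}).1.opp x (hmem x) h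
  obtain ⟨μs, hμs, hμsd⟩ := exists_pareto_above P {x | comm x ∈ (Set.univ : Set ι)} μ0 h0
  refine ⟨fun x Q => if Q = Set.univ then μs x else ν Q x, ?_, ?_⟩
  · intro Q
    by_cases hQ : Q = Set.univ
    · subst hQ
      simpa only [if_pos rfl, ↓reduceIte] using hμs
    · simpa only [if_neg hQ] using hν Q
  · intro x
    by_cases hx : ({comm x} : Set ι) = Set.univ
    · simp only [if_pos rfl, if_pos hx]
      exact Or.inl rfl
    · simp only [if_pos rfl, if_neg hx]
      exact hμsd x trivial
end

section
/- In a society consisting of exactly two communities, integration monotonicity and Pareto optimality are compatible: for every strict preference profile on a society with exactly two communities, there exists a matching scheme that is both Pareto optimal and integration monotonic. (This holds because, for a society with two communities, integration monotonicity and weak integration monotonicity are equivalent.) -/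
lemma weakPref_trans' {Agent : Type} {man : Agent → Bool} (P : Prefs Agent man)
    (x a b c : Agent) (h1 : P.weakPref x a b) (h2 : P.weakPref x b c) :
    P.weakPref x a c := by
  rcases h1 with rfl | h1
  · exact h2
  · rcases h2 with rfl | h2
    · exact Or.inr h1
    · exact Or.inr (P.trans x a b c h1 h2)

lemma id_matching' {Agent : Type} (man : Agent → Bool) (A : Set Agent) :
    IsMatching man A id :=
  ⟨fun _ h => h, fun _ _ => rfl, fun _ _ h => absurd rfl h, fun _ _ => rfl⟩

lemma exists_pareto_dom {Agent : Type} [Fintype Agent] {man : Agent → Bool}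
    (P : Prefs Agent man) (A : Set Agent) (μ : Agent → Agent)
    (hμ : IsMatching man A μ) :
    ∃ ν, IsPareto P A ν ∧ ∀ x ∈ A, P.weakPref x (ν x) (μ x) := by
  classical
  set r : Agent → Agent → ℕ := fun x a => (Finset.univ.filter (fun b => P.pref x a b)).card
    with hrdef
  have hr_le : ∀ x a b, P.weakPref x a b → r x b ≤ r x a := by
    intro x a b h
    rcases h with rfl | h
    · exact le_rfl
    · apply Finset.card_le_card
      intro c hc
      simp only [hrdef, Finset.mem_filter, Finset.mem_univ, true_and] at hc ⊢
      exact P.trans x a b c h hc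
  have hr_lt : ∀ x a b, P.pref x a b → r x b < r x a := by
    intro x a b h
    apply Finset.card_lt_card
    rw [Finset.ssubset_def]
    constructor
    · intro c hc
      simp only [hrdef, Finset.mem_filter, Finset.mem_univ, true_and] at hc ⊢
      exact P.trans x a b c h hc
    · intro hsub
      have hb : b ∈ Finset.univ.filter (fun c => P.pref x a c) := by
        simp only [Finset.mem_filter, Finset.mem_univ, true_and]; exact h
      have := hsub hb
      simp only [Finset.mem_filter, Finset.mem_univ, true_and] at this
      exact P.irrefl x b this
  set Φ : (Agent → Agent) → ℕ := fun ν => ∑ x, r x (ν x) with hΦdef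
  set S : Set (Agent → Agent) :=
    {ν | IsMatching man A ν ∧ ∀ x ∈ A, P.weakPref x (ν x) (μ x)} with hSdef
  have hfin : S.Finite := Set.toFinite S
  have hne : S.Nonempty := ⟨μ, hμ, fun x _ => Or.inl rfl⟩
  obtain ⟨ν, hνS, hmax'⟩ := hfin.exists_maximalFor Φ S hne
  have hmax : ∀ a' ∈ S, Φ ν ≤ Φ a' → Φ ν = Φ a' := fun a' ha h => le_antisymm h (hmax' ha h)
  refine ⟨ν, ⟨hνS.1, ?_⟩, hνS.2⟩
  rintro ⟨μ', hμ', hweak, y, hyA, hy⟩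
  have hμ'S : μ' ∈ S :=
    ⟨hμ', fun x hx => weakPref_trans' P x (μ' x) (ν x) (μ x) (hweak x hx) (hνS.2 x hx)⟩
  have hlt : Φ ν < Φ μ' := by
    apply Finset.sum_lt_sum
    · intro i _
      by_cases hi : i ∈ A
      · exact hr_le i (μ' i) (ν i) (hweak i hi)
      · rw [hνS.1.fix i hi, hμ'.fix i hi]
    · exact ⟨y, Finset.mem_univ y, hr_lt y (μ' y) (ν y) hy⟩
  exact absurd (hmax μ' hμ'S hlt.le) hlt.ne

/-- **With exactly two communities, IM and Pareto optimality are compatible.**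
For every society consisting of exactly two pairwise disjoint communities (each
with at least one man and one woman) and every strict preference profile, there
exists a matching scheme that is Pareto optimal for every population and
integration monotonic. -/
theorem two_communities_pareto_and_IM_compatible
    {Agent ι : Type} [Fintype Agent] [Fintype ι]
    (man : Agent → Bool) (comm : Agent → ι)
    (hasMan : ∀ i : ι, ∃ x, comm x = i ∧ man x = true)
    (hasWoman : ∀ i : ι, ∃ x, comm x = i ∧ man x = false)
    (hκ : Fintype.card ι = 2)
    (P : Prefs Agent man) :
    ∃ σ : Agent → Set ι → Agent,
      (∀ Q : Set ι, IsPareto P {x | comm x ∈ Q} (fun x => σ x Q)) ∧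
      (∀ Q Q' : Set ι, Disjoint Q Q' → ∀ x : Agent, comm x ∈ Q →
          P.weakPref x (σ x (Q ∪ Q')) (σ x Q)) := by
  classical
  -- Pareto optimal matching on each population, dominating the identity
  choose pm hpmP _ using fun Q : Set ι =>
    exists_pareto_dom P {x | comm x ∈ Q} id (id_matching' man _)
  -- gluing of the single-community matchings
  set base : Set ι → Agent → Agent :=
    fun Q x => if comm x ∈ Q then pm {comm x} x else x with hbase_def
  have hpm_comm : ∀ (i : ι) (x : Agent), comm x = i → comm (pm {i} x) = i := by
    intro i x hx
    have := (hpmP {i}).1.mem x (by simp [hx])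
    simpa using this
  have hbase : ∀ Q : Set ι, IsMatching man {x | comm x ∈ Q} (base Q) := by
    intro Q
    constructor
    · intro x hx
      simp only [hbase_def, Set.mem_setOf_eq] at hx ⊢
      rw [if_pos hx, hpm_comm (comm x) x rfl]
      exact hx
    · intro x hx
      simp only [Set.mem_setOf_eq] at hx
      have hy : comm (pm {comm x} x) = comm x := hpm_comm (comm x) x rfl
      have e1 : base Q x = pm {comm x} x := by
        simp only [hbase_def]; exact if_pos hx
      calc base Q (base Q x) = base Q (pm {comm x} x) := by rw [e1]
        _ = pm {comm x} (pm {comm x} x) := by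
            simp only [hbase_def]; rw [hy]; exact if_pos hx
        _ = x := (hpmP {comm x}).1.invol x (by simp)
    · intro x hx hne
      simp only [Set.mem_setOf_eq] at hx
      simp only [hbase_def, if_pos hx] at hne ⊢
      exact (hpmP {comm x}).1.opp x (by simp) hne
    · intro x hx
      simp only [Set.mem_setOf_eq] at hx
      simp only [hbase_def, if_neg hx]
  -- Pareto improvement of the glued matching
  choose big hbigP hbigD using fun Q : Set ι =>
    exists_pareto_dom P {x | comm x ∈ Q} (base Q) (hbase Q)
  refine ⟨fun x Q => if Q.Subsingleton then pm Q x else big Q x, ?_, ?_⟩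
  · intro Q
    by_cases hQ : Q.Subsingleton
    · simpa only [if_pos hQ] using hpmP Q
    · simpa only [if_neg hQ] using hbigP Q
  · intro Q Q' hdisj x hxQ
    by_cases hU : (Q ∪ Q').Subsingleton
    · have hQQ : Q ∪ Q' = Q := by
        apply Set.Subset.antisymm _ Set.subset_union_left
        intro j hj
        have : j = comm x := hU hj (Set.mem_union_left Q' hxQ)
        rw [this]; exact hxQ
      rw [hQQ]
      exact Or.inl rfl
    · by_cases hQs : Q.Subsingleton
      · have hQ : Q = {comm x} := hQs.eq_singleton_of_mem hxQ
        simp only [if_neg hU, if_pos hQs]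
        have h1 := hbigD (Q ∪ Q') x (Set.mem_union_left Q' hxQ)
        have h2 : base (Q ∪ Q') x = pm Q x := by
          simp only [hbase_def, if_pos (Set.mem_union_left Q' hxQ)]
          rw [hQ]
        rwa [h2] at h1
      · obtain ⟨a, ha, b, hb, hab⟩ := Set.not_subsingleton_iff.1 hQs
        have hQ' : Q' = ∅ := by
          by_contra h
          obtain ⟨c, hc⟩ := Set.nonempty_iff_ne_empty.2 h
          have hac : a ≠ c := hdisj.ne_of_mem ha hc
          have hbc : b ≠ c := hdisj.ne_of_mem hb hc
          have h3 : ({a, b, c} : Finset ι).card = 3 :=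
            Finset.card_eq_three.2 ⟨a, b, c, hab, hac, hbc, rfl⟩
          have := Finset.card_le_univ ({a, b, c} : Finset ι)
          rw [h3] at this
          omega
        rw [hQ', Set.union_empty]
        exact Or.inl rfl
end
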